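/- arXiv:1705.00167 — 5 statements merged into one kernel-verified Lean document; each statement's English description precedes it below -/
import Mathlib

section
/- Let σ: 𝒜 → ℬ⁺ be a non-erasing morphism between finite alphabets, let x ∈ 𝒜^ℤ, and let X be the closure of the shift orbit of x in 𝒜^ℤ. If σ is recognizable in X (each y ∈ ℬ^ℤ has at most one centered σ-representation (k,x') with x' ∈ X), then σ is recognizable in the sense of Mossé for x: there exists ℓ ≥ 0 such that for each m ∈ C_σ(0,x) and each m' ∈ ℤ, σ(x)_{[m−ℓ,m+ℓ)} = σ(x)_{[m'−ℓ,m'+ℓ)} implies m' ∈ C_σ(0,x). -/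
open scoped BigOperators

namespace Recog

variable {A B C : Type*}

/-- A morphism assigning a word to each letter is non-erasing if every image is nonempty. -/
def NonErasing (σ : A → List B) : Prop := ∀ a, σ a ≠ []

/-- Apply a morphism letterwise to a finite word, concatenating the images. -/
def wordApply (σ : A → List B) : List A → List B
  | [] => []
  | a :: w => σ a ++ wordApply σ w

/-- Composition of morphisms `τ ∘ σ`. -/
def comp (τ : B → List C) (σ : A → List B) : A → List C := fun a => wordApply τ (σ a)

/-- The `ℓ`-th cutting point of the representation `(0, x)`:
`|σ(x_[0,ℓ))|` for `ℓ ≥ 0` and `-|σ(x_[ℓ,0))|` for `ℓ < 0`. -/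
def cut (σ : A → List B) (x : ℤ → A) (ℓ : ℤ) : ℤ :=
  if 0 ≤ ℓ then ∑ i ∈ Finset.range ℓ.toNat, ((σ (x i)).length : ℤ)
  else -∑ i ∈ Finset.range (-ℓ).toNat, ((σ (x (-(i : ℤ) - 1))).length : ℤ)

/-- `y` is the bi-infinite image `σ(x)`, where `σ(x₀)` starts at position `0`. -/
def IsSubstPt (σ : A → List B) (x : ℤ → A) (y : ℤ → B) : Prop :=
  ∀ (ℓ : ℤ) (j : ℕ) (hj : j < (σ (x ℓ)).length),
    y (cut σ x ℓ + j) = (σ (x ℓ)).get ⟨j, hj⟩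

/-- `(k, x)` is a `σ`-representation of `y`, i.e. `y = T^k σ(x)`. -/
def IsRep (σ : A → List B) (y : ℤ → B) (k : ℤ) (x : ℤ → A) : Prop :=
  IsSubstPt σ x fun n => y (n - k)

/-- `(k, x)` is a centered `σ`-representation of `y`: `y = T^k σ(x)` with `0 ≤ k < |σ(x₀)|`. -/
def IsCenteredRep (σ : A → List B) (y : ℤ → B) (k : ℤ) (x : ℤ → A) : Prop :=
  IsRep σ y k x ∧ 0 ≤ k ∧ k < ((σ (x 0)).length : ℤ)

/-- `y` is aperiodic: `T^p y ≠ y` for all `p ≥ 1`. -/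
def Aperiodic (y : ℤ → B) : Prop := ∀ p : ℕ, 1 ≤ p → (fun n => y (n + p)) ≠ y

/-- `y` is periodic: `T^p y = y` for some `p ≥ 1`. -/
def Periodic (y : ℤ → B) : Prop := ∃ p : ℕ, 1 ≤ p ∧ (fun n => y (n + p)) = y

/-- The set of `σ`-cutting points of the representation `(k, x)`. -/
def cutSet (σ : A → List B) (x : ℤ → A) (k : ℤ) : Set ℤ :=
  {m : ℤ | ∃ ℓ : ℤ, m = cut σ x ℓ - k}

/-- `σ` is recognizable in `X`: every `y` has at most one centered `σ`-representation in `X`. -/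
def RecIn (σ : A → List B) (X : Set (ℤ → A)) : Prop :=
  ∀ (y : ℤ → B) (k k' : ℤ) (x x' : ℤ → A), x ∈ X → x' ∈ X →
    IsCenteredRep σ y k x → IsCenteredRep σ y k' x' → k = k' ∧ x = x'

/-- `σ` is recognizable in `X` for aperiodic points. -/
def RecInAp (σ : A → List B) (X : Set (ℤ → A)) : Prop :=
  ∀ y : ℤ → B, Aperiodic y → ∀ (k k' : ℤ) (x x' : ℤ → A), x ∈ X → x' ∈ X →
    IsCenteredRep σ y k x → IsCenteredRep σ y k' x' → k = k' ∧ x = x'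

/-- `σ` is left permutative: the first letters of `σ a` and `σ b` differ for distinct `a, b`. -/
def LeftPermutative (σ : A → List B) : Prop :=
  ∀ a b : A, a ≠ b → (σ a).head? ≠ (σ b).head?

/-- `σ` is right permutative: the last letters of `σ a` and `σ b` differ for distinct `a, b`. -/
def RightPermutative (σ : A → List B) : Prop :=
  ∀ a b : A, a ≠ b → (σ a).getLast? ≠ (σ b).getLast?

/-- `σ` and `σ'` are rotationally conjugate. -/
def RotConj (σ σ' : A → List B) : Prop :=
  ∃ w : List B, (∀ a, σ a ++ w = w ++ σ' a) ∨ (∀ a, w ++ σ a = σ' a ++ w)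

/-- The incidence matrix of `σ`, over `ℚ`: entry `(b, a)` counts occurrences of `b` in `σ a`. -/
noncomputable def incidence (σ : A → List B) [DecidableEq B] : Matrix B A ℚ :=
  Matrix.of fun b a => ((σ a).count b : ℚ)

/-- The finite subword `x_[i, i+m)` of a bi-infinite sequence. -/
def factor (x : ℤ → A) (i : ℤ) (m : ℕ) : List A := (List.range m).map fun j => x (i + j)

/-- The language of a bi-infinite sequence: the set of its finite subwords. -/
def lang (x : ℤ → A) : Set (List A) := {w | ∃ (i : ℤ) (m : ℕ), w = factor x i m}

/-- `σ` is injective on bi-infinite sequences. -/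
def InjZ (σ : A → List B) : Prop :=
  ∀ (x x' : ℤ → A) (y : ℤ → B), IsSubstPt σ x y → IsSubstPt σ x' y → x = x'

/-- Cutting points for one-sided sequences. -/
def cutN (σ : A → List B) (x : ℕ → A) (ℓ : ℕ) : ℕ :=
  ∑ i ∈ Finset.range ℓ, (σ (x i)).length

/-- `y` is the one-sided image `σ(x)` for `x : ℕ → A`. -/
def IsSubstPtN (σ : A → List B) (x : ℕ → A) (y : ℕ → B) : Prop :=
  ∀ (ℓ j : ℕ) (hj : j < (σ (x ℓ)).length),
    y (cutN σ x ℓ + j) = (σ (x ℓ)).get ⟨j, hj⟩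

/-- `σ` is injective on one-sided (right-infinite) sequences. -/
def InjN (σ : A → List B) : Prop :=
  ∀ (x x' : ℕ → A) (y : ℕ → B), IsSubstPtN σ x y → IsSubstPtN σ x' y → x = x'

/-- The total length `⦀σ⦀ = Σ_a |σ a|`. -/
def totalLen (σ : A → List B) [Fintype A] : ℕ := ∑ a, (σ a).length

/-- `X` is invariant under the two-sided shift. -/
def ShiftInvariant (X : Set (ℤ → A)) : Prop :=
  ∀ x ∈ X, (fun n => x (n + 1)) ∈ X ∧ (fun n => x (n - 1)) ∈ X

/-- The iterate `σ^n` of a substitution, applied to a letter. -/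
def iter (σ : A → List A) : ℕ → A → List A
  | 0, a => [a]
  | n + 1, a => wordApply (iter σ n) (σ a)

/-- The language `ℒ_σ` of a substitution: subwords of the `σ^n(a)`. -/
def subLang (σ : A → List A) : Set (List A) := {w | ∃ (n : ℕ) (a : A), w <:+: iter σ n a}

/-- The substitutive shift `X_σ`. -/
def subX (σ : A → List A) : Set (ℤ → A) := {x | ∀ w ∈ lang x, w ∈ subLang σ}

/-- `σ` is recognizable in the sense of Mossé for `x`. -/
def MosseRec (σ : A → List B) (x : ℤ → A) : Prop :=
  ∃ ℓ : ℕ, ∀ y : ℤ → B, IsSubstPt σ x y →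
    ∀ m ∈ cutSet σ x 0, ∀ m' : ℤ,
      factor y (m - ℓ) (2 * ℓ) = factor y (m' - ℓ) (2 * ℓ) → m' ∈ cutSet σ x 0

section Sadic

variable {𝒜 : ℕ → Type*}

/-- `block σ N = σ_[0,N)`, mapping a letter of `𝒜 N` to a word over `𝒜 0`. -/
def block (σ : ∀ n, 𝒜 (n + 1) → List (𝒜 n)) : ∀ N, 𝒜 N → List (𝒜 0)
  | 0, a => [a]
  | N + 1, a => wordApply (block σ N) (σ N a)

/-- `blockFrom σ n k = σ_[n,n+k)`, mapping a letter of `𝒜 (n+k)` to a word over `𝒜 n`. -/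
def blockFrom (σ : ∀ n, 𝒜 (n + 1) → List (𝒜 n)) (n k : ℕ) : 𝒜 (n + k) → List (𝒜 n) :=
  block (𝒜 := fun m => 𝒜 (n + m)) (fun m => σ (n + m)) k

/-- The language `ℒ^(n)_σ` of a directive sequence. -/
def sadicLang (σ : ∀ n, 𝒜 (n + 1) → List (𝒜 n)) (n : ℕ) : Set (List (𝒜 n)) :=
  {w | ∃ (k : ℕ) (a : 𝒜 (n + k)), 1 ≤ k ∧ w <:+: blockFrom σ n k a}

/-- The shift `X^(n)_σ` of a directive sequence. -/
def sadicX (σ : ∀ n, 𝒜 (n + 1) → List (𝒜 n)) (n : ℕ) : Set (ℤ → 𝒜 n) :=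
  {x | ∀ w ∈ lang x, w ∈ sadicLang σ n}

/-- A directive sequence is everywhere growing if `min_a |σ_[0,n)(a)| → ∞`. -/
def EverywhereGrowing (σ : ∀ n, 𝒜 (n + 1) → List (𝒜 n)) : Prop :=
  ∀ m : ℕ, ∃ N : ℕ, ∀ n ≥ N, ∀ a : 𝒜 n, m ≤ (block σ n a).length

end Sadic

end Recog

namespace Recog

variable {A B : Type*}

lemma cut_zero (σ : A → List B) (x : ℤ → A) : cut σ x 0 = 0 := by simp [cut]

lemma cut_succ (σ : A → List B) (x : ℤ → A) (ℓ : ℤ) :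
    cut σ x (ℓ + 1) = cut σ x ℓ + ((σ (x ℓ)).length : ℤ) := by
  rcases le_or_gt 0 ℓ with h | h
  · have h1 : (0:ℤ) ≤ ℓ + 1 := by omega
    simp only [cut, if_pos h, if_pos h1]
    have h2 : (ℓ + 1).toNat = ℓ.toNat + 1 := by omega
    rw [h2, Finset.sum_range_succ]
    have h3 : ((ℓ.toNat : ℤ)) = ℓ := Int.toNat_of_nonneg h
    rw [h3]
  · have h1 : ¬ (0:ℤ) ≤ ℓ := by omega
    have key : ∑ i ∈ Finset.range (-ℓ).toNat, ((σ (x (-(i : ℤ) - 1))).length : ℤ)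
        = ∑ i ∈ Finset.range (-(ℓ+1)).toNat, ((σ (x (-(i : ℤ) - 1))).length : ℤ)
          + ((σ (x ℓ)).length : ℤ) := by
      have h2 : (-ℓ).toNat = (-(ℓ+1)).toNat + 1 := by omega
      rw [h2, Finset.sum_range_succ]
      have h3 : (((-(ℓ+1)).toNat : ℤ)) = -(ℓ+1) := Int.toNat_of_nonneg (by omega)
      rw [h3, show -(-(ℓ+1)) - 1 = ℓ from by ring]
    rcases eq_or_lt_of_le (show ℓ + 1 ≤ 0 by omega) with h0 | h0
    · rw [show cut σ x (ℓ+1) = 0 by rw [h0, cut_zero]]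
      simp only [cut, if_neg h1]
      rw [key, h0]
      simp
    · simp only [cut, if_neg h1, if_neg (by omega : ¬ (0:ℤ) ≤ ℓ + 1)]
      rw [key]
      ring

lemma cut_pred (σ : A → List B) (x : ℤ → A) (ℓ : ℤ) :
    cut σ x (ℓ - 1) = cut σ x ℓ - ((σ (x (ℓ - 1))).length : ℤ) := by
  have := cut_succ σ x (ℓ - 1)
  rw [show ℓ - 1 + 1 = ℓ by ring] at this
  omega

lemma cut_add (σ : A → List B) (x : ℤ → A) (j ℓ : ℤ) :
    cut σ x (j + ℓ) = cut σ x j + cut σ (fun i => x (i + j)) ℓ := by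
  induction ℓ using Int.induction_on with
  | zero => simp [cut_zero]
  | succ n ih =>
      rw [show j + ((n:ℤ) + 1) = (j + n) + 1 by ring, cut_succ, ih, cut_succ]
      have hxe : x (j + (n:ℤ)) = (fun i => x (i + j)) (n:ℤ) := by
        show x (j + (n:ℤ)) = x ((n:ℤ) + j)
        rw [add_comm]
      rw [hxe]
      ring
  | pred n ih =>
      rw [show j + (-(n:ℤ) - 1) = (j + -(n:ℤ)) - 1 by ring, cut_pred, ih, cut_pred]
      have hxe : x (j + -(n:ℤ) - 1) = (fun i => x (i + j)) (-(n:ℤ) - 1) := by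
        show x (j + -(n:ℤ) - 1) = x (-(n:ℤ) - 1 + j)
        ring_nf
      rw [hxe]
      ring

lemma le_cut (σ : A → List B) (hσ : NonErasing σ) (x : ℤ → A) :
    ∀ m : ℕ, (m : ℤ) ≤ cut σ x m := by
  intro m
  induction m with
  | zero => simp [cut_zero]
  | succ n ih =>
      have h1 : 1 ≤ ((σ (x n)).length : ℤ) := by
        exact_mod_cast List.length_pos_iff.mpr (hσ (x n))
      have := cut_succ σ x n
      push_cast
      push_cast at ih
      omega

lemma cut_le (σ : A → List B) (hσ : NonErasing σ) (x : ℤ → A) :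
    ∀ m : ℕ, cut σ x (-(m : ℤ)) ≤ -(m : ℤ) := by
  intro m
  induction m with
  | zero => simp [cut_zero]
  | succ n ih =>
      have h1 : 1 ≤ ((σ (x (-(n:ℤ) - 1))).length : ℤ) := by
        exact_mod_cast List.length_pos_iff.mpr (hσ _)
      have h2 := cut_pred σ x (-(n:ℤ))
      push_cast
      rw [show -((n:ℤ) + 1) = -(n:ℤ) - 1 by ring]
      omega

lemma exists_cut_interval (σ : A → List B) (hσ : NonErasing σ) (x : ℤ → A) (n : ℤ) :
    ∃ j : ℤ, cut σ x j ≤ n ∧ n < cut σ x (j + 1) := by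
  have hbdd : ∃ b : ℤ, ∀ z : ℤ, cut σ x z ≤ n → z ≤ b := by
    refine ⟨(n.natAbs : ℤ), fun z hz => ?_⟩
    by_contra hzb
    push_neg at hzb
    have hz0 : 0 ≤ z := by omega
    have := le_cut σ hσ x z.toNat
    rw [Int.toNat_of_nonneg hz0] at this
    omega
  have hinh : ∃ z : ℤ, cut σ x z ≤ n := by
    refine ⟨-(n.natAbs : ℤ), ?_⟩
    have := cut_le σ hσ x n.natAbs
    omega
  obtain ⟨j, hj1, hj2⟩ := Int.exists_greatest_of_bdd hbdd hinh
  refine ⟨j, hj1, ?_⟩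
  by_contra hc
  push_neg at hc
  have := hj2 (j + 1) hc
  omega

lemma cut_congr (σ : A → List B) {x x' : ℤ → A} (ℓ : ℤ)
    (h : ∀ i : ℤ, |i| ≤ |ℓ| → x i = x' i) : cut σ x ℓ = cut σ x' ℓ := by
  unfold cut
  rcases le_or_gt 0 ℓ with hl | hl
  · rw [if_pos hl, if_pos hl]
    refine Finset.sum_congr rfl fun i hi => ?_
    rw [h i ?_]
    rw [Finset.mem_range] at hi
    rw [abs_le]
    constructor
    · have := abs_nonneg ℓ
      omega
    · calc (i:ℤ) ≤ ℓ := by omega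
      _ ≤ |ℓ| := le_abs_self ℓ
  · rw [if_neg (by omega), if_neg (by omega)]
    congr 1
    refine Finset.sum_congr rfl fun i hi => ?_
    rw [h (-(i:ℤ) - 1) ?_]
    rw [Finset.mem_range] at hi
    rw [abs_le]
    have h1 : (i:ℤ) < -ℓ := by omega
    constructor
    · calc -|ℓ| ≤ ℓ := neg_abs_le ℓ
      _ ≤ -(i:ℤ) - 1 := by omega
    · calc -(i:ℤ) - 1 ≤ 0 := by omega
      _ ≤ |ℓ| := abs_nonneg ℓ

lemma get_cast {l l' : List B} (h : l = l') {t : ℕ} (ht : t < l.length)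
    (ht' : t < l'.length) : l.get ⟨t, ht⟩ = l'.get ⟨t, ht'⟩ := by
  subst h
  rfl

lemma IsSubstPt.shift {σ : A → List B} {x : ℤ → A} {y : ℤ → B}
    (h : IsSubstPt σ x y) (j : ℤ) :
    IsSubstPt σ (fun i => x (i + j)) (fun n => y (n + cut σ x j)) := by
  intro ℓ t ht
  have hx : x (ℓ + j) = x (j + ℓ) := by rw [add_comm]
  have ht' : t < (σ (x (j + ℓ))).length := by
    rw [← hx]
    exact ht
  have hc : cut σ (fun i => x (i + j)) ℓ = cut σ x (j + ℓ) - cut σ x j := by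
    rw [cut_add σ x j ℓ]
    ring
  have hcast : (σ ((fun i => x (i + j)) ℓ)).get ⟨t, ht⟩ = (σ (x (j + ℓ))).get ⟨t, ht'⟩ :=
    get_cast (congrArg σ hx) ht ht'
  show y (cut σ (fun i => x (i + j)) ℓ + ↑t + cut σ x j) = _
  rw [hcast, hc,
    show cut σ x (j + ℓ) - cut σ x j + (t:ℤ) + cut σ x j = cut σ x (j + ℓ) + (t:ℤ) from by ring]
  exact h (j + ℓ) t ht'

lemma flatMap_sing {α β : Type*} (f : α → β) (l : List α) :
    (l.flatMap fun a => [f a]) = l.map f := by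
  induction l with
  | nil => rfl
  | cons a l ih => rw [List.flatMap_cons, List.map_cons, ih, List.singleton_append]

lemma factor_getElem (y : ℤ → B) (i : ℤ) {m t : ℕ} (ht : t < m) :
    (factor y i m)[t]? = some (y (i + t)) := by
  simp [factor, flatMap_sing, List.getElem?_map, List.getElem?_range ht]

lemma ultra_pigeon {α β : Type*} [Finite β] (U : Ultrafilter α) (f : α → β) :
    ∃ b, ∀ᶠ n in (U : Filter α), f n = b := by
  by_contra hc
  push_neg at hc
  have h1 : ∀ b, {n | f n = b}ᶜ ∈ U := fun b =>
    hc b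
  have h2 : (⋂ b, {n | f n = b}ᶜ) ∈ U := Filter.iInter_mem.mpr h1
  have h3 : (⋂ b, {n : α | f n = b}ᶜ) = ∅ := by
    ext n
    simp only [Set.mem_iInter, Set.mem_compl_iff, Set.mem_setOf_eq,
      Set.mem_empty_iff_false, iff_false, not_forall, not_not]
    exact ⟨f n, rfl⟩
  rw [h3] at h2
  exact Filter.empty_notMem _ h2

lemma ultra_limit {α : Type*} {ι : Type*} [Finite α] (U : Ultrafilter ι) (u : ι → ℤ → α) :
    ∃ z : ℤ → α, ∀ i, ∀ᶠ n in (U : Filter ι), u n i = z i := by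
  choose z hz using fun i => ultra_pigeon U (fun n => u n i)
  exact ⟨z, hz⟩

lemma mem_closure_of_ultra {α ι : Type*} [TopologicalSpace α] [DiscreteTopology α]
    (S : Set (ℤ → α)) (U : Ultrafilter ι) (u : ι → ℤ → α) (hu : ∀ n, u n ∈ S)
    (z : ℤ → α) (hz : ∀ i, ∀ᶠ n in (U : Filter ι), u n i = z i) : z ∈ closure S := by
  rw [mem_closure_iff]
  intro V hV hzV
  obtain ⟨I, t, ht, hsub⟩ := isOpen_pi_iff.mp hV z hzV
  have hev : ∀ᶠ n in (U : Filter ι), ∀ i ∈ I, u n i = z i :=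
    (Filter.eventually_all_finset I).mpr fun i _ => hz i
  obtain ⟨n, hn⟩ := hev.exists
  refine ⟨u n, hsub ?_, hu n⟩
  intro i hi
  rw [hn i hi]
  exact (ht i hi).2

lemma IsSubstPt.limit {σ : A → List B} {ι : Type*} (l : Filter ι) [l.NeBot]
    {X : ι → ℤ → A} {Y : ι → ℤ → B} {xl : ℤ → A} {yl : ℤ → B}
    (h : ∀ n, IsSubstPt σ (X n) (Y n))
    (hx : ∀ i, ∀ᶠ n in l, X n i = xl i)
    (hy : ∀ i, ∀ᶠ n in l, Y n i = yl i) : IsSubstPt σ xl yl := by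
  intro ℓ t ht
  have hall : ∀ᶠ n in l, ∀ i ∈ Finset.Icc (-|ℓ|) |ℓ|, X n i = xl i :=
    (Filter.eventually_all_finset _).mpr fun i _ => hx i
  obtain ⟨n, hxn, hyn⟩ := (hall.and (hy (cut σ xl ℓ + t))).exists
  have hc : cut σ (X n) ℓ = cut σ xl ℓ := by
    refine cut_congr σ ℓ fun i hi => hxn i ?_
    rw [Finset.mem_Icc]
    exact abs_le.mp hi
  have hxl : X n ℓ = xl ℓ := by
    refine hxn ℓ ?_
    rw [Finset.mem_Icc]
    exact ⟨neg_abs_le ℓ, le_abs_self ℓ⟩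
  have ht' : t < (σ (X n ℓ)).length := by rw [hxl]; exact ht
  have key := h n ℓ t ht'
  rw [hc, hyn] at key
  have k1 : (σ (X n ℓ))[t]? = some (yl (cut σ xl ℓ + t)) := by
    rw [List.getElem?_eq_getElem ht']
    exact congrArg some key.symm
  rw [hxl] at k1
  rw [List.getElem?_eq_getElem ht] at k1
  have := Option.some.inj k1
  rw [← this]
  rfl

end Recog

open Recog in
/-- If `σ` is recognizable in the orbit closure `X` of `x`, then `σ` is
recognizable in the sense of Mossé for `x`. -/
theorem stmt5 {A B : Type*} [Fintype A] [Fintype B]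
    [TopologicalSpace A] [DiscreteTopology A]
    (σ : A → List B) (hσ : NonErasing σ) (x : ℤ → A)
    (hrec : RecIn σ (closure {z : ℤ → A | ∃ n : ℤ, z = fun i => x (i + n)})) :
    MosseRec σ x := by
  classical
  by_contra hM
  rw [MosseRec] at hM
  push_neg at hM
  choose yF hsub mF hmc m'F hfac hm' using hM
  have hmc' : ∀ ℓ : ℕ, ∃ j : ℤ, mF ℓ = cut σ x j - 0 := fun ℓ => hmc ℓ
  choose jF hj using hmc'
  have hmcut : ∀ n : ℕ, cut σ x (jF n) = mF n := fun n => by have := hj n; omega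
  choose j'F hj'1 hj'2 using fun n : ℕ => exists_cut_interval σ hσ x (m'F n)
  set kF : ℕ → ℤ := fun n => m'F n - cut σ x (j'F n) with hkF
  have hk0 : ∀ n, 0 ≤ kF n := fun n => by have := hj'1 n; simp [hkF]; omega
  have hklt : ∀ n, kF n < ((σ (x (j'F n))).length : ℤ) := fun n => by
    have h1 := hj'2 n
    rw [cut_succ] at h1
    simp only [hkF]
    omega
  have hk1 : ∀ n, 1 ≤ kF n := fun n => by
    rcases eq_or_lt_of_le (hk0 n) with h | h
    · exfalso
      exact hm' n ⟨j'F n, by simp only [hkF] at h; omega⟩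
    · omega
  set M : ℕ := Finset.univ.sup fun a : A => (σ a).length with hM0
  have hkM : ∀ n, (kF n).toNat < M + 1 := fun n => by
    have h1 := hklt n
    have h2 : (σ (x (j'F n))).length ≤ M :=
      Finset.le_sup (f := fun a : A => (σ a).length) (Finset.mem_univ _)
    omega
  obtain ⟨U, hU⟩ := Filter.exists_ultrafilter_le (Filter.atTop : Filter ℕ)
  set x1 : ℕ → ℤ → A := fun n i => x (i + jF n) with hx1d
  set x2 : ℕ → ℤ → A := fun n i => x (i + j'F n) with hx2d
  set y1 : ℕ → ℤ → B := fun n s => yF n (s + mF n) with hy1d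
  set y2 : ℕ → ℤ → B := fun n s => yF n (s + m'F n) with hy2d
  obtain ⟨xa, hxa⟩ := ultra_limit U x1
  obtain ⟨xb, hxb⟩ := ultra_limit U x2
  obtain ⟨ya, hya⟩ := ultra_limit U y1
  obtain ⟨yb, hyb⟩ := ultra_limit U y2
  obtain ⟨v, hv⟩ := ultra_pigeon U (fun n => (⟨(kF n).toNat, hkM n⟩ : Fin (M + 1)))
  set k : ℤ := ((v : ℕ) : ℤ) with hkd
  have hkv : ∀ᶠ n in (U : Filter ℕ), kF n = k := by
    refine hv.mono fun n hn => ?_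
    have h1 : (kF n).toNat = (v : ℕ) := congrArg Fin.val hn
    have := hk0 n
    omega
  -- memberships
  have hxaX : xa ∈ closure {z : ℤ → A | ∃ n : ℤ, z = fun i => x (i + n)} :=
    mem_closure_of_ultra {z : ℤ → A | ∃ n : ℤ, z = fun i => x (i + n)} U x1
      (fun n => ⟨jF n, rfl⟩) xa hxa
  have hxbX : xb ∈ closure {z : ℤ → A | ∃ n : ℤ, z = fun i => x (i + n)} :=
    mem_closure_of_ultra {z : ℤ → A | ∃ n : ℤ, z = fun i => x (i + n)} U x2
      (fun n => ⟨j'F n, rfl⟩) xb hxb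
  -- the two limit images agree
  have hyab : ya = yb := by
    funext s
    have hev1 : ∀ᶠ n in (U : Filter ℕ), s.natAbs + 1 ≤ n := hU (Filter.eventually_ge_atTop _)
    obtain ⟨n, hn1, hn2, hn3⟩ := ((hya s).and ((hyb s).and hev1)).exists
    rw [← hn1, ← hn2]
    show yF n (s + mF n) = yF n (s + m'F n)
    have hsn : (0:ℤ) ≤ s + n := by omega
    have ht : (s + (n:ℤ)).toNat < 2 * n := by omega
    have h0 : (factor (yF n) (mF n - (n:ℤ)) (2 * n))[(s + (n:ℤ)).toNat]?
        = (factor (yF n) (m'F n - (n:ℤ)) (2 * n))[(s + (n:ℤ)).toNat]? := by rw [hfac n]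
    rw [factor_getElem _ _ ht, factor_getElem _ _ ht] at h0
    have h1 := Option.some.inj h0
    rw [Int.toNat_of_nonneg hsn] at h1
    rw [show mF n - (n:ℤ) + (s + n) = s + mF n by ring,
      show m'F n - (n:ℤ) + (s + n) = s + m'F n by ring] at h1
    exact h1
  -- representations before passing to the limit
  have h1sub : ∀ n, IsSubstPt σ (x1 n) (y1 n) := by
    intro n
    have h := (hsub n).shift (jF n)
    rw [hmcut n] at h
    exact h
  have h2sub : ∀ n, IsSubstPt σ (x2 n) (fun s => y2 n (s - kF n)) := by
    intro n
    have h := (hsub n).shift (j'F n)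
    have he : (fun s => y2 n (s - kF n)) = fun s => yF n (s + cut σ x (j'F n)) := by
      funext s
      show yF n (s - kF n + m'F n) = yF n (s + cut σ x (j'F n))
      congr 1
      simp only [hkF]
      ring
    rw [he]
    exact h
  -- limit representations
  have hlim1 : IsSubstPt σ xa ya := IsSubstPt.limit (U : Filter ℕ) h1sub hxa hya
  have hy2 : ∀ i : ℤ, ∀ᶠ n in (U : Filter ℕ), (fun s => y2 n (s - kF n)) i = yb (i - k) := by
    intro i
    refine (hkv.and (hyb (i - k))).mono fun n hn => ?_
    show y2 n (i - kF n) = yb (i - k)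
    rw [hn.1]
    exact hn.2
  have hlim2 : IsSubstPt σ xb (fun i => yb (i - k)) :=
    IsSubstPt.limit (U : Filter ℕ) h2sub hxb hy2
  have hk1' : 1 ≤ k := by
    obtain ⟨n, hn1⟩ := hkv.exists
    have := hk1 n
    omega
  have rep1 : IsCenteredRep σ ya 0 xa := by
    refine ⟨?_, le_refl 0, ?_⟩
    · unfold IsRep
      rw [show (fun n => ya (n - 0)) = ya from funext fun n => by rw [sub_zero]]
      exact hlim1
    · exact_mod_cast List.length_pos_iff.mpr (hσ _)
  have rep2 : IsCenteredRep σ ya k xb := by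
    rw [hyab]
    refine ⟨hlim2, by omega, ?_⟩
    obtain ⟨n, hn1, hn2⟩ := (hkv.and (hxb 0)).exists
    have h1 := hklt n
    have h2 : x2 n 0 = x (j'F n) := by
      show x (0 + j'F n) = x (j'F n)
      rw [zero_add]
    rw [← hn2, h2]
    omega
  have := (hrec ya 0 k xa xb hxaX hxbX rep1 rep2).1
  omega
end

section
/- Let σ: 𝒜 → ℬ⁺ be a non-erasing morphism between finite alphabets, let y ∈ ℬ^ℤ be an aperiodic point, and let (k,x), (k',x') be centered σ-representations of y with x' = T^ℓ(x) for some ℓ ∈ ℤ. Then (k,x) = (k',x'): aperiodic points have a unique centered σ-representation along a shift orbit. -/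
open scoped BigOperators

namespace Recog

variable {A B : Type*}

lemma cut_shift (σ : A → List B) (x : ℤ → A) (ℓ : ℤ) (m : ℤ) :
    cut σ (fun i => x (i + ℓ)) m = cut σ x (ℓ + m) - cut σ x ℓ := by
  induction m using Int.induction_on with
  | zero => simp [cut_zero]
  | succ n ih =>
      rw [cut_succ, ih]
      have h1 : ℓ + ((n : ℤ) + 1) = (ℓ + n) + 1 := by ring
      rw [h1, cut_succ]
      have h2 : (n : ℤ) + ℓ = ℓ + n := by ring
      rw [h2]
      ring
  | pred n ih =>
      have h1 := cut_succ σ (fun i => x (i + ℓ)) (-(n : ℤ) - 1)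
      have h2 := cut_succ σ x (ℓ + (-(n : ℤ) - 1))
      have h3 : -(n : ℤ) - 1 + 1 = -n := by ring
      have h4 : ℓ + (-(n : ℤ) - 1) + 1 = ℓ + -n := by ring
      rw [h3] at h1
      rw [h4] at h2
      have h5 : -(n : ℤ) - 1 + ℓ = ℓ + (-(n : ℤ) - 1) := by ring
      rw [h5] at h1
      omega

lemma one_le_len (σ : A → List B) (hσ : NonErasing σ) (a : A) :
    (1 : ℤ) ≤ ((σ a).length : ℤ) := by
  have := List.length_pos_iff.mpr (hσ a)
  omega

lemma cut_bounds (σ : A → List B) (hσ : NonErasing σ) (x : ℤ → A) (ℓ : ℤ) :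
    (0 ≤ ℓ → ℓ ≤ cut σ x ℓ) ∧ (ℓ ≤ 0 → cut σ x ℓ ≤ ℓ) := by
  induction ℓ using Int.induction_on with
  | zero => simp [cut_zero]
  | succ n ih =>
      have h1 := cut_succ σ x n
      have h2 := one_le_len σ hσ (x n)
      constructor
      · intro _; have := ih.1 (by omega); omega
      · intro h; omega
  | pred n ih =>
      have h1 := cut_succ σ x (-(n:ℤ) - 1)
      have h3 : -(n : ℤ) - 1 + 1 = -n := by ring
      rw [h3] at h1
      have h2 := one_le_len σ hσ (x (-(n:ℤ) - 1))
      constructor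
      · intro h; omega
      · intro _; have := ih.2 (by omega); omega

lemma cut_cover (σ : A → List B) (hσ : NonErasing σ) (x : ℤ → A) (n : ℤ) :
    ∃ ℓ : ℤ, cut σ x ℓ ≤ n ∧ n < cut σ x ℓ + ((σ (x ℓ)).length : ℤ) := by
  have hbdd : ∃ b : ℤ, ∀ z : ℤ, cut σ x z ≤ n → z ≤ b := by
    refine ⟨max n 0, fun z hz => ?_⟩
    rcases le_or_gt 0 z with h | h
    · have := (cut_bounds σ hσ x z).1 h
      exact le_max_of_le_left (by omega)
    · exact le_max_of_le_right (by omega)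
  have hne : ∃ z : ℤ, cut σ x z ≤ n := by
    refine ⟨min n 0, ?_⟩
    have := (cut_bounds σ hσ x (min n 0)).2 (min_le_right n 0)
    omega
  obtain ⟨ℓ, hℓ, hmax⟩ := Int.exists_greatest_of_bdd hbdd hne
  refine ⟨ℓ, hℓ, ?_⟩
  by_contra hcon
  push_neg at hcon
  have : cut σ x (ℓ + 1) ≤ n := by rw [cut_succ]; omega
  have := hmax _ this
  omega

lemma substPt_unique (σ : A → List B) (hσ : NonErasing σ) (x : ℤ → A)
    (z z' : ℤ → B) (h : IsSubstPt σ x z) (h' : IsSubstPt σ x z') : z = z' := by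
  funext n
  obtain ⟨ℓ, h1, h2⟩ := cut_cover σ hσ x n
  have hj : (n - cut σ x ℓ).toNat < (σ (x ℓ)).length := by omega
  have hn : n = cut σ x ℓ + ((n - cut σ x ℓ).toNat : ℤ) := by omega
  rw [hn, h ℓ _ hj, h' ℓ _ hj]

lemma substPt_shift (σ : A → List B) (x : ℤ → A) (z : ℤ → B) (ℓ : ℤ)
    (h : IsSubstPt σ x z) :
    IsSubstPt σ (fun i => x (i + ℓ)) (fun n => z (n + cut σ x ℓ)) := by
  intro m j hj
  simp only
  have hc : cut σ (fun i => x (i + ℓ)) m + j + cut σ x ℓ = cut σ x (ℓ + m) + j := by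
    rw [cut_shift]; ring
  rw [hc]
  have hxm : m + ℓ = ℓ + m := by ring
  have hj' : j < (σ (x (ℓ + m))).length := by rw [← hxm]; exact hj
  have hlist : σ (x (ℓ + m)) = σ (x (m + ℓ)) := by rw [hxm]
  rw [h (ℓ + m) j hj']
  exact List.get_of_eq hlist ⟨j, hj'⟩

end Recog

open Recog in
/-- An aperiodic point has a unique centered σ-representation along a shift
orbit: two centered representations `(k,x)` and `(k', T^ℓ x)` coincide. -/
theorem stmt10 {A B : Type*} [Fintype A] [Fintype B]
    (σ : A → List B) (hσ : NonErasing σ) (y : ℤ → B) (hy : Aperiodic y)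
    (k k' : ℤ) (x x' : ℤ → A) (ℓ : ℤ)
    (hx : IsCenteredRep σ y k x) (hx' : IsCenteredRep σ y k' x')
    (hshift : x' = fun i => x (i + ℓ)) :
    k = k' ∧ x = x' := by
  obtain ⟨hrep, hk0, hk1⟩ := hx
  obtain ⟨hrep', hk0', hk1'⟩ := hx'
  subst hshift
  -- shifted substitution point
  have hs : IsSubstPt σ (fun i => x (i + ℓ)) (fun n => y (n + cut σ x ℓ - k)) :=
    substPt_shift σ x (fun n => y (n - k)) ℓ hrep
  have heq : (fun n => y (n + cut σ x ℓ - k)) = (fun n => y (n - k')) :=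
    substPt_unique σ hσ _ _ _ hs hrep'
  have heq' : ∀ n : ℤ, y (n + cut σ x ℓ - k) = y (n - k') := fun n => congrFun heq n
  -- the shift amount must be zero by aperiodicity
  set c := cut σ x ℓ with hc
  have hd : c - k + k' = 0 := by
    by_contra hd0
    set d := c - k + k' with hdd
    have hper : ∀ m : ℤ, y (m + d) = y m := by
      intro m
      have := heq' (m + k')
      have h1 : m + k' + c - k = m + d := by rw [hdd]; ring
      have h2 : m + k' - k' = m := by ring
      rw [h1, h2] at this
      exact this
    rcases lt_or_gt_of_ne hd0 with h | h
    · -- d < 0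
      have hp : 1 ≤ (-d).toNat := by omega
      apply hy (-d).toNat hp
      funext m
      have := hper (m + (-d).toNat)
      have h1 : m + ((-d).toNat : ℤ) + d = m := by omega
      rw [h1] at this
      exact this.symm
    · have hp : 1 ≤ d.toNat := by omega
      apply hy d.toNat hp
      funext m
      have := hper m
      have h1 : m + d = m + (d.toNat : ℤ) := by omega
      rw [h1] at this
      exact this
  -- so cut σ x ℓ = k - k'
  have hckk : c = k - k' := by omega
  -- show ℓ = 0
  have hℓ0 : ℓ = 0 := by
    rcases lt_trichotomy ℓ 0 with h | h | h
    · -- ℓ < 0 : c ≤ -|σ (x ℓ)|, but x' 0 = x ℓ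
      exfalso
      have hx'0 : (0:ℤ) + ℓ = ℓ := by ring
      have hk1'' : k' < ((σ (x ℓ)).length : ℤ) := by
        rw [← hx'0]; exact hk1'
      have hcle : c ≤ -((σ (x ℓ)).length : ℤ) := by
        rw [hc]
        unfold cut
        rw [if_neg (by omega)]
        have hmem : (-ℓ).toNat - 1 ∈ Finset.range (-ℓ).toNat := by
          simp; omega
        have hsingle := Finset.single_le_sum
          (f := fun i : ℕ => ((σ (x (-(i : ℤ) - 1))).length : ℤ))
          (fun i _ => by positivity) hmem
        have harg : (-(((-ℓ).toNat - 1 : ℕ) : ℤ) - 1) = ℓ := by omega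
        rw [harg] at hsingle
        linarith
      omega
    · exact h
    · -- ℓ > 0 : c ≥ |σ (x 0)|
      exfalso
      have hcge : ((σ (x 0)).length : ℤ) ≤ c := by
        rw [hc]
        unfold cut
        rw [if_pos (by omega)]
        have hmem : 0 ∈ Finset.range ℓ.toNat := by simp; omega
        have hsingle := Finset.single_le_sum
          (f := fun i : ℕ => ((σ (x (i : ℤ))).length : ℤ))
          (fun i _ => by positivity) hmem
        simpa using hsingle
      omega
  subst hℓ0
  have hx0 : (fun i => x (i + 0)) = x := by funext i; rw [add_zero]
  rw [hx0]
  refine ⟨?_, rfl⟩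
  have := cut_zero σ x
  omega
end

section
/- Let σ: 𝒜 → ℬ⁺ be a left permutative or right permutative non-erasing morphism between finite alphabets, and let y ∈ ℬ^ℤ. If y has two distinct centered σ-representations, then y is periodic (T^p y = y for some p ≥ 1). -/
open scoped BigOperators

namespace Recog11

open Recog

variable {A B : Type*}

/-- A "block function" for `y`: for each position, the letter whose image covers it
and the offset within that image, with coherence between consecutive positions. -/
structure BF (σ : A → List B) (y : ℤ → B) where
  a : ℤ → A
  j : ℤ → ℕ
  hj : ∀ n, j n < (σ (a n)).length
  hy : ∀ n, y n = (σ (a n))[j n]'(hj n)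
  step : ∀ n, (a (n+1) = a n ∧ j (n+1) = j n + 1 ∧ j n + 1 < (σ (a n)).length)
            ∨ (j n + 1 = (σ (a n)).length ∧ j (n+1) = 0)

theorem cut_zero (σ : A → List B) (x : ℤ → A) : cut σ x 0 = 0 := by
  simp [cut]

theorem cut_neg (σ : A → List B) (x : ℤ → A) {m : ℤ} (hm : m ≤ 0) :
    cut σ x m = -∑ i ∈ Finset.range (-m).toNat, ((σ (x (-(i : ℤ) - 1))).length : ℤ) := by
  rcases eq_or_lt_of_le hm with h | h
  · subst h; simp [cut]
  · rw [cut, if_neg (by omega)]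

theorem cut_succ (σ : A → List B) (x : ℤ → A) (ℓ : ℤ) :
    cut σ x (ℓ + 1) = cut σ x ℓ + ((σ (x ℓ)).length : ℤ) := by
  rcases le_or_gt 0 ℓ with h | h
  · rw [cut, cut, if_pos (by omega : (0:ℤ) ≤ ℓ + 1), if_pos h]
    have h2 : (ℓ+1).toNat = ℓ.toNat + 1 := by omega
    rw [h2, Finset.sum_range_succ]
    have h3 : ((ℓ.toNat : ℕ) : ℤ) = ℓ := by omega
    rw [h3]
  · rw [cut_neg σ x (by omega : ℓ + 1 ≤ 0), cut_neg σ x (by omega : ℓ ≤ 0)]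
    have h2 : (-ℓ).toNat = (-(ℓ+1)).toNat + 1 := by omega
    rw [h2, Finset.sum_range_succ]
    have h3 : -(((-(ℓ+1)).toNat : ℕ) : ℤ) - 1 = ℓ := by omega
    rw [h3]
    ring

theorem len_pos {σ : A → List B} (hσ : NonErasing σ) (a : A) : 1 ≤ (σ a).length :=
  List.length_pos_iff.mpr (hσ a)

theorem cut_add_nat {σ : A → List B} (hσ : NonErasing σ) (x : ℤ → A) (ℓ : ℤ) (t : ℕ) :
    cut σ x ℓ + t ≤ cut σ x (ℓ + t) := by
  induction t with
  | zero => simp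
  | succ t ih =>
    have h := cut_succ σ x (ℓ + t)
    have h2 := len_pos hσ (x (ℓ + t))
    have e : ℓ + ((t : ℕ) + 1 : ℕ) = (ℓ + t) + 1 := by push_cast; ring
    rw [e, h]
    push_cast
    omega

theorem cut_le_cut {σ : A → List B} (hσ : NonErasing σ) (x : ℤ → A) {ℓ ℓ' : ℤ}
    (h : ℓ ≤ ℓ') : cut σ x ℓ ≤ cut σ x ℓ' := by
  have h1 := cut_add_nat hσ x ℓ (ℓ' - ℓ).toNat
  rw [show ℓ + ((ℓ' - ℓ).toNat : ℤ) = ℓ' by omega] at h1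
  omega

theorem cut_lt_cut {σ : A → List B} (hσ : NonErasing σ) (x : ℤ → A) {ℓ ℓ' : ℤ}
    (h : ℓ < ℓ') : cut σ x ℓ < cut σ x ℓ' := by
  have h1 := cut_add_nat hσ x ℓ (ℓ' - ℓ).toNat
  rw [show ℓ + ((ℓ' - ℓ).toNat : ℤ) = ℓ' by omega] at h1
  omega

theorem self_le_cut {σ : A → List B} (hσ : NonErasing σ) (x : ℤ → A) {ℓ : ℤ}
    (h : 0 ≤ ℓ) : ℓ ≤ cut σ x ℓ := by
  have h1 := cut_add_nat hσ x 0 ℓ.toNat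
  rw [show (0 : ℤ) + (ℓ.toNat : ℤ) = ℓ by omega, cut_zero] at h1
  omega

theorem cut_le_self {σ : A → List B} (hσ : NonErasing σ) (x : ℤ → A) {ℓ : ℤ}
    (h : ℓ ≤ 0) : cut σ x ℓ ≤ ℓ := by
  have h1 := cut_add_nat hσ x ℓ (-ℓ).toNat
  rw [show ℓ + ((-ℓ).toNat : ℤ) = 0 by omega, cut_zero] at h1
  omega

theorem exists_bidx {σ : A → List B} (hσ : NonErasing σ) (x : ℤ → A) (m : ℤ) :
    ∃ ℓ : ℤ, cut σ x ℓ ≤ m ∧ m < cut σ x (ℓ + 1) := by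
  have hbdd : ∃ b : ℤ, ∀ z : ℤ, cut σ x z ≤ m → z ≤ b := by
    refine ⟨max m 0, fun z hz => ?_⟩
    by_contra hc
    push_neg at hc
    have h1 : (0:ℤ) ≤ z := le_trans (le_max_right m 0) hc.le
    have := self_le_cut hσ x h1
    have : m < z := lt_of_le_of_lt (le_max_left m 0) hc
    omega
  have hinh : ∃ z : ℤ, cut σ x z ≤ m := by
    refine ⟨min m 0, ?_⟩
    have := cut_le_self hσ x (min_le_right m 0)
    have := min_le_left m 0
    omega
  obtain ⟨ℓ, hℓ1, hℓ2⟩ := Int.exists_greatest_of_bdd hbdd hinh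
  refine ⟨ℓ, hℓ1, ?_⟩
  by_contra hc
  push_neg at hc
  have := hℓ2 (ℓ + 1) hc
  omega

theorem bidx_unique {σ : A → List B} (hσ : NonErasing σ) (x : ℤ → A) {m ℓ ℓ' : ℤ}
    (h1 : cut σ x ℓ ≤ m) (h2 : m < cut σ x (ℓ + 1))
    (h3 : cut σ x ℓ' ≤ m) (h4 : m < cut σ x (ℓ' + 1)) : ℓ = ℓ' := by
  rcases lt_trichotomy ℓ ℓ' with h | h | h
  · have := cut_le_cut hσ x (by omega : ℓ + 1 ≤ ℓ')
    omega
  · exact h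
  · have := cut_le_cut hσ x (by omega : ℓ' + 1 ≤ ℓ)
    omega

end Recog11
namespace Recog11

open Recog

variable {A B : Type*}

theorem exists_bf {σ : A → List B} {y : ℤ → B} (hσ : NonErasing σ) {k : ℤ} {x : ℤ → A}
    (h : IsCenteredRep σ y k x) :
    ∃ f : BF σ y, ((f.j 0 : ℤ) = k) ∧ (∀ ℓ : ℤ, f.a (cut σ x ℓ - k) = x ℓ)
      ∧ (∀ ℓ : ℤ, f.a (cut σ x ℓ - k - 1) = x (ℓ - 1)) := by
  obtain ⟨hrep, hk0, hk1⟩ := h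
  choose I hI1 hI2 using exists_bidx hσ x
  have hIu : ∀ m ℓ, cut σ x ℓ ≤ m → m < cut σ x (ℓ+1) → I m = ℓ := fun m ℓ h1 h2 =>
    bidx_unique hσ x (hI1 m) (hI2 m) h1 h2
  have hj' : ∀ n : ℤ, (n + k - cut σ x (I (n+k))).toNat < (σ (x (I (n+k)))).length := by
    intro n
    have h1 := hI1 (n+k); have h2 := hI2 (n+k)
    have h3 := cut_succ σ x (I (n+k))
    omega
  have hy' : ∀ n : ℤ,
      y n = (σ (x (I (n+k))))[(n + k - cut σ x (I (n+k))).toNat]'(hj' n) := by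
    intro n
    have h1 := hI1 (n+k)
    have h4 := hrep (I (n+k)) ((n + k - cut σ x (I (n+k))).toNat) (hj' n)
    simp only [List.get_eq_getElem] at h4
    rw [show cut σ x (I (n+k)) + ((n + k - cut σ x (I (n+k))).toNat : ℤ) - k = n by omega] at h4
    exact h4
  have hstep : ∀ n : ℤ,
      (x (I (n+1+k)) = x (I (n+k)) ∧
        (n+1 + k - cut σ x (I (n+1+k))).toNat = (n + k - cut σ x (I (n+k))).toNat + 1 ∧
        (n + k - cut σ x (I (n+k))).toNat + 1 < (σ (x (I (n+k)))).length)
      ∨ ((n + k - cut σ x (I (n+k))).toNat + 1 = (σ (x (I (n+k)))).length ∧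
        (n+1 + k - cut σ x (I (n+1+k))).toNat = 0) := by
    intro n
    have h1 := hI1 (n+k); have h2 := hI2 (n+k)
    have h3 := cut_succ σ x (I (n+k))
    have e1 : n + 1 + k = (n + k) + 1 := by ring
    rcases lt_or_eq_of_le (by omega : n + k + 1 ≤ cut σ x (I (n+k) + 1)) with hlt | heq
    · have hIe : I (n+k+1) = I (n+k) := hIu _ _ (by omega) (by omega)
      left
      rw [e1, hIe]
      exact ⟨rfl, by omega, by omega⟩
    · have h4 := cut_succ σ x (I (n+k) + 1)
      have h5 := len_pos hσ (x (I (n+k) + 1))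
      have hIe : I (n+k+1) = I (n+k) + 1 := hIu _ _ (by omega) (by omega)
      right
      rw [e1, hIe]
      exact ⟨by omega, by omega⟩
  refine ⟨⟨fun n => x (I (n+k)), fun n => (n + k - cut σ x (I (n+k))).toNat, hj', hy', hstep⟩,
    ?_, ?_, ?_⟩
  · have hc1 := cut_succ σ x 0
    rw [cut_zero] at hc1
    have hI0 : I (0 + k) = 0 := hIu _ _ (by rw [cut_zero]; omega) (by rw [hc1]; omega)
    simp only [hI0, cut_zero]
    omega
  · intro ℓ
    have h3 := cut_succ σ x ℓ
    have h5 := len_pos hσ (x ℓ)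
    have hIe : I (cut σ x ℓ - k + k) = ℓ := by
      rw [show cut σ x ℓ - k + k = cut σ x ℓ by ring]
      exact hIu _ _ le_rfl (by omega)
    simp only [hIe]
  · intro ℓ
    have h3 := cut_succ σ x (ℓ - 1)
    rw [show ℓ - 1 + 1 = ℓ by ring] at h3
    have h5 := len_pos hσ (x (ℓ - 1))
    have hIe : I (cut σ x ℓ - k - 1 + k) = ℓ - 1 := by
      rw [show cut σ x ℓ - k - 1 + k = cut σ x ℓ - 1 by ring]
      refine hIu _ _ (by omega) ?_
      rw [show ℓ - 1 + 1 = ℓ by ring]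
      omega
    simp only [hIe]

theorem rep_ext {σ : A → List B} {y : ℤ → B} (hσ : NonErasing σ) {k k' : ℤ} {x x' : ℤ → A}
    (f g : BF σ y)
    (hfk : (f.j 0 : ℤ) = k) (hfa : ∀ ℓ, f.a (cut σ x ℓ - k) = x ℓ)
    (hfp : ∀ ℓ, f.a (cut σ x ℓ - k - 1) = x (ℓ-1))
    (hgk : (g.j 0 : ℤ) = k') (hga : ∀ ℓ, g.a (cut σ x' ℓ - k') = x' ℓ)
    (hgp : ∀ ℓ, g.a (cut σ x' ℓ - k' - 1) = x' (ℓ-1))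
    (ha : f.a = g.a) (hj : f.j = g.j) : k = k' ∧ x = x' := by
  have hkk : k = k' := by rw [← hfk, ← hgk, hj]
  have main : ∀ ℓ : ℤ, cut σ x ℓ = cut σ x' ℓ ∧ x ℓ = x' ℓ := by
    intro ℓ
    induction ℓ using Int.induction_on with
    | zero =>
      refine ⟨by rw [cut_zero, cut_zero], ?_⟩
      have h1 := hfa 0
      have h2 := hga 0
      rw [cut_zero] at h1 h2
      rw [← h1, ← h2, ha, hkk]
    | succ i ih =>
      obtain ⟨hc, hx⟩ := ih
      have hc' : cut σ x ((i : ℤ) + 1) = cut σ x' ((i : ℤ) + 1) := by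
        rw [cut_succ, cut_succ, hc, hx]
      refine ⟨hc', ?_⟩
      have h1 := hfa ((i : ℤ) + 1)
      have h2 := hga ((i : ℤ) + 1)
      rw [← h1, ← h2, ha, hkk, hc']
    | pred i ih =>
      obtain ⟨hc, hx⟩ := ih
      have h1 := hfp (-(i : ℤ))
      have h2 := hgp (-(i : ℤ))
      have hx' : x (-(i : ℤ) - 1) = x' (-(i : ℤ) - 1) := by
        rw [← h1, ← h2, ha, hkk, hc]
      refine ⟨?_, hx'⟩
      have h3 := cut_succ σ x (-(i : ℤ) - 1)
      have h4 := cut_succ σ x' (-(i : ℤ) - 1)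
      rw [show -(i:ℤ) - 1 + 1 = -(i:ℤ) by ring] at h3 h4
      rw [hx'] at h3
      omega
  exact ⟨hkk, funext fun ℓ => (main ℓ).2⟩

end Recog11
namespace Recog11

open Recog

variable {A B : Type*}

theorem head_inj {σ : A → List B} (hperm : LeftPermutative σ) {a b : A}
    (h : (σ a).head? = (σ b).head?) : a = b := by
  by_contra hne
  exact hperm a b hne h

theorem BF.head_eq {σ : A → List B} {y : ℤ → B} (f : BF σ y) {n : ℤ} (h : f.j n = 0) :
    (σ (f.a n)).head? = some (y n) := by
  have hy := f.hy n
  have hl := f.hj n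
  rw [List.head?_eq_getElem?, hy, ← List.getElem?_eq_getElem, h]

theorem cc_eq {σ : A → List B} {y : ℤ → B} (hperm : LeftPermutative σ) (f g : BF σ y) {n : ℤ}
    (h1 : f.j n = 0) (h2 : g.j n = 0) : f.a n = g.a n :=
  head_inj hperm ((f.head_eq h1).trans (g.head_eq h2).symm)

theorem y_eq {σ : A → List B} {y : ℤ → B} (f : BF σ y) {m m' : ℤ}
    (ha : f.a m = f.a m') (hj : f.j m = f.j m') : y m = y m' := by
  have h1 : (σ (f.a m))[f.j m]? = (σ (f.a m'))[f.j m']? := by rw [ha, hj]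
  rw [List.getElem?_eq_getElem (f.hj m), List.getElem?_eq_getElem (f.hj m')] at h1
  rw [f.hy m, f.hy m']
  exact Option.some.inj h1

variable [Fintype A]

noncomputable def Lb (σ : A → List B) : ℕ := (Finset.univ.sup fun a : A => (σ a).length) + 1

theorem lt_Lb {σ : A → List B} {y : ℤ → B} (f : BF σ y) (n : ℤ) : f.j n < Lb σ := by
  have h1 := f.hj n
  have h2 : (σ (f.a n)).length ≤ Finset.univ.sup fun a : A => (σ a).length :=
    Finset.le_sup (f := fun a : A => (σ a).length) (Finset.mem_univ _)
  unfold Lb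
  omega

noncomputable def BF.st {σ : A → List B} {y : ℤ → B} (f g : BF σ y) (n : ℤ) :
    (A × Fin (Lb σ)) × (A × Fin (Lb σ)) :=
  ((f.a n, ⟨f.j n, lt_Lb f n⟩), (g.a n, ⟨g.j n, lt_Lb g n⟩))

theorem st_iff {σ : A → List B} {y : ℤ → B} (f g : BF σ y) (m m' : ℤ) :
    BF.st f g m = BF.st f g m' ↔
      (f.a m = f.a m' ∧ f.j m = f.j m' ∧ g.a m = g.a m' ∧ g.j m = g.j m') := by
  simp [BF.st, Prod.ext_iff, Fin.ext_iff, and_assoc]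

theorem core {σ : A → List B} (hperm : LeftPermutative σ)
    (y : ℤ → B) (f g : BF σ y) (hne : ¬ (f.a = g.a ∧ f.j = g.j)) : Periodic y := by
  by_cases hA : ∃ M : ℤ, ∀ n : ℤ, n < M → ¬(f.j n = 0 ∧ g.j n = 0)
  case neg =>
    -- common cuts unbounded below: the two block functions are equal, contradiction
    exfalso
    apply hne
    push_neg at hA
    have sync_succ : ∀ n : ℤ, (f.a n = g.a n ∧ f.j n = g.j n) →
        (f.a (n+1) = g.a (n+1) ∧ f.j (n+1) = g.j (n+1)) := by
      rintro n ⟨ha, hj⟩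
      rcases f.step n with ⟨fa, fj, flt⟩ | ⟨feq, fz⟩ <;>
        rcases g.step n with ⟨ga, gj, glt⟩ | ⟨geq, gz⟩
      · exact ⟨by rw [fa, ga, ha], by rw [fj, gj, hj]⟩
      · rw [ha, hj] at flt; omega
      · rw [ha, hj] at feq; omega
      · exact ⟨cc_eq hperm f g fz gz, by rw [fz, gz]⟩
    have sync_all : ∀ m : ℤ, f.a m = g.a m ∧ f.j m = g.j m := by
      intro m
      obtain ⟨n, hn, hf0, hg0⟩ := hA m
      have base : f.a n = g.a n ∧ f.j n = g.j n :=
        ⟨cc_eq hperm f g hf0 hg0, by rw [hf0, hg0]⟩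
      have up : ∀ t : ℕ, f.a (n+t) = g.a (n+t) ∧ f.j (n+t) = g.j (n+t) := by
        intro t
        induction t with
        | zero => simpa using base
        | succ t ih =>
          have h2 := sync_succ (n+t) ih
          rw [show n + ((t : ℕ) + 1 : ℕ) = n + t + 1 by push_cast; ring]
          exact h2
      have h3 := up (m - n).toNat
      rw [show n + (((m - n).toNat : ℕ) : ℤ) = m by omega] at h3
      exact h3
    exact ⟨funext fun m => (sync_all m).1, funext fun m => (sync_all m).2⟩
  case pos =>
    obtain ⟨M, hM⟩ := hA
    have step_det : ∀ m m' : ℤ, BF.st f g m = BF.st f g m' →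
        ¬(f.j (m+1) = 0 ∧ g.j (m+1) = 0) → BF.st f g (m+1) = BF.st f g (m'+1) := by
      intro m m' hmm hcc
      obtain ⟨e1, e2, e3, e4⟩ := (st_iff f g m m').mp hmm
      rw [st_iff]
      have ff : (f.a (m+1) = f.a (m'+1) ∧ f.j (m+1) = f.j (m'+1)) ∨
          (f.j (m+1) = 0 ∧ f.j (m'+1) = 0) := by
        rcases f.step m with ⟨fa, fj, flt⟩ | ⟨feq, fz⟩ <;>
          rcases f.step m' with ⟨fa', fj', flt'⟩ | ⟨feq', fz'⟩
        · exact Or.inl ⟨by rw [fa, fa', e1], by rw [fj, fj', e2]⟩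
        · rw [e1, e2] at flt; omega
        · rw [e1, e2] at feq; omega
        · exact Or.inr ⟨fz, fz'⟩
      have gg : (g.a (m+1) = g.a (m'+1) ∧ g.j (m+1) = g.j (m'+1)) ∨
          (g.j (m+1) = 0 ∧ g.j (m'+1) = 0) := by
        rcases g.step m with ⟨ga, gj, glt⟩ | ⟨geq, gz⟩ <;>
          rcases g.step m' with ⟨ga', gj', glt'⟩ | ⟨geq', gz'⟩
        · exact Or.inl ⟨by rw [ga, ga', e3], by rw [gj, gj', e4]⟩
        · rw [e3, e4] at glt; omega
        · rw [e3, e4] at geq; omega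
        · exact Or.inr ⟨gz, gz'⟩
      rcases ff with ⟨F1, F2⟩ | ⟨F0, F0'⟩ <;> rcases gg with ⟨G1, G2⟩ | ⟨G0, G0'⟩
      · exact ⟨F1, F2, G1, G2⟩
      · have yeq : y (m+1) = y (m'+1) := y_eq f F1 F2
        have G1 : g.a (m+1) = g.a (m'+1) :=
          head_inj hperm (by rw [g.head_eq G0, g.head_eq G0', yeq])
        exact ⟨F1, F2, G1, by rw [G0, G0']⟩
      · have yeq : y (m+1) = y (m'+1) := y_eq g G1 G2
        have F1 : f.a (m+1) = f.a (m'+1) :=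
          head_inj hperm (by rw [f.head_eq F0, f.head_eq F0', yeq])
        exact ⟨F1, by rw [F0, F0'], G1, G2⟩
      · exact absurd ⟨F0, G0⟩ hcc
    have prop : ∀ m1 m2 : ℤ, m1 ≤ m2 → BF.st f g m1 = BF.st f g m2 →
        ∀ t : ℕ, m2 + t ≤ M - 1 → BF.st f g (m1 + t) = BF.st f g (m2 + t) := by
      intro m1 m2 hle heq t
      induction t with
      | zero => intro _; simpa using heq
      | succ t ih =>
        intro hb
        have hb' : m2 + (t : ℤ) ≤ M - 1 := by push_cast at hb; omega
        have h1 := step_det (m1 + t) (m2 + t) (ih hb') (hM (m1 + t + 1) (by push_cast at hb; omega))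
        rw [show m1 + ((t : ℕ) + 1 : ℕ) = m1 + t + 1 by push_cast; ring,
          show m2 + ((t : ℕ) + 1 : ℕ) = m2 + t + 1 by push_cast; ring]
        exact h1
    obtain ⟨s, hsfib⟩ := Finite.exists_infinite_fiber (fun t : ℕ => BF.st f g (M - 1 - t))
    have hs : ((fun t : ℕ => BF.st f g (M - 1 - t)) ⁻¹' {s}).Infinite :=
      Set.infinite_coe_iff.mp hsfib
    obtain ⟨t1, ht1⟩ := hs.nonempty
    obtain ⟨t2, ht2mem, ht12⟩ := hs.exists_gt t1
    have ht1' : BF.st f g (M - 1 - t1) = s := ht1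
    have ht2' : BF.st f g (M - 1 - t2) = s := ht2mem
    set p : ℕ := t2 - t1 with hpdef
    have hp1 : 1 ≤ p := by omega
    have key : BF.st f g (M - 1 - t2) = BF.st f g (M - 1 - t2 + p) := by
      rw [show M - 1 - (t2 : ℤ) + p = M - 1 - t1 by push_cast; omega, ht1', ht2']
    have htail : ∀ m : ℤ, m + p ≤ M - 1 → BF.st f g m = BF.st f g (m + p) := by
      intro m hm
      obtain ⟨t, htmem, htgt⟩ := hs.exists_gt (max t2 (M - 1 - m).toNat)
      have hmem : BF.st f g (M - 1 - t) = s := htmem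
      have hle1 : M - 1 - (t : ℤ) ≤ M - 1 - t2 := by
        have := le_of_max_le_left htgt.le
        omega
      have h1 : BF.st f g (M - 1 - t) = BF.st f g (M - 1 - t2) := by rw [hmem, ht2']
      have h2 := prop _ _ hle1 h1 p (by push_cast; omega)
      have hper : BF.st f g (M - 1 - t) = BF.st f g (M - 1 - t + p) :=
        (h2.trans (key.symm.trans (ht2'.trans hmem.symm))).symm
      have hle2 : M - 1 - (t : ℤ) ≤ m := by
        have := le_of_max_le_right htgt.le
        omega
      have h3 := prop (M - 1 - t) (M - 1 - t + p) (by omega) hper ((m - (M - 1 - t)).toNat)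
        (by push_cast; omega)
      rw [show M - 1 - (t : ℤ) + ((m - (M - 1 - t)).toNat : ℤ) = m by omega,
        show M - 1 - (t : ℤ) + p + ((m - (M - 1 - t)).toNat : ℤ) = m + p by omega] at h3
      exact h3
    have hext : ∀ t : ℕ, (∀ n : ℤ, n < M + t → ¬(f.j n = 0 ∧ g.j n = 0)) ∧
        (∀ m : ℤ, m + p ≤ M - 1 + t → BF.st f g m = BF.st f g (m + p)) := by
      intro t
      induction t with
      | zero =>
        refine ⟨fun n hn => hM n (by push_cast at hn; omega),
          fun m hm => htail m (by push_cast at hm; omega)⟩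
      | succ t ih =>
        obtain ⟨hC, hP⟩ := ih
        have hnot : ¬(f.j (M + t) = 0 ∧ g.j (M + t) = 0) := by
          rintro ⟨hf0, hg0⟩
          have hfs := f.step (M + t - 1)
          rw [show M + (t : ℤ) - 1 + 1 = M + t by ring] at hfs
          have hgs := g.step (M + t - 1)
          rw [show M + (t : ℤ) - 1 + 1 = M + t by ring] at hgs
          rcases hfs with ⟨_, hj1, _⟩ | ⟨hA1, _⟩
          · omega
          rcases hgs with ⟨_, hj2, _⟩ | ⟨hB1, _⟩
          · omega
          have hst := hP (M + t - 1 - p) (by push_cast; omega)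
          rw [show M + (t : ℤ) - 1 - p + p = M + t - 1 by ring] at hst
          obtain ⟨e1, e2, e3, e4⟩ := (st_iff f g _ _).mp hst
          rcases f.step (M + t - 1 - p) with ⟨_, _, hlt⟩ | ⟨_, hz⟩
          · rw [e1, e2] at hlt; omega
          rcases g.step (M + t - 1 - p) with ⟨_, _, hlt'⟩ | ⟨_, hz'⟩
          · rw [e3, e4] at hlt'; omega
          rw [show M + (t : ℤ) - 1 - p + 1 = M + t - p by ring] at hz hz'
          exact hC (M + t - p) (by push_cast; omega) ⟨hz, hz'⟩
        refine ⟨?_, ?_⟩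
        · intro n hn
          rcases lt_or_eq_of_le (by push_cast at hn; omega : n ≤ M + (t : ℤ)) with h | h
          · exact hC n h
          · rw [h]; exact hnot
        · intro m hm
          by_cases hcase : m + p ≤ M - 1 + t
          · exact hP m hcase
          · have hmeq : m = M + (t : ℤ) - p := by push_cast at hm hcase; omega
            have hst := hP (M + t - 1 - p) (by push_cast; omega)
            rw [show M + (t : ℤ) - 1 - p + p = M + t - 1 by ring] at hst
            have hccx : ¬(f.j (M + t - 1 - p + 1) = 0 ∧ g.j (M + t - 1 - p + 1) = 0) := by
              rw [show M + (t : ℤ) - 1 - p + 1 = M + t - p by ring]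
              exact hC _ (by push_cast; omega)
            have h1 := step_det (M + t - 1 - p) (M + t - 1) hst hccx
            rw [show M + (t : ℤ) - 1 - p + 1 = M + t - p by ring,
              show M + (t : ℤ) - 1 + 1 = M + t by ring] at h1
            rw [hmeq, show M + (t : ℤ) - p + p = M + t by ring]
            exact h1
    have hall : ∀ m : ℤ, BF.st f g m = BF.st f g (m + p) := by
      intro m
      obtain ⟨_, hP⟩ := hext (m + p - (M - 1)).toNat
      exact hP m (by omega)
    refine ⟨p, hp1, funext fun n => ?_⟩
    obtain ⟨e1, e2, _, _⟩ := (st_iff f g n (n + p)).mp (hall n)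
    exact (y_eq f e1 e2).symm

end Recog11
namespace Recog11

open Recog

variable {A B : Type*}

/-- Reverse a block function: reflect positions and reverse each image word. -/
def BF.rev {σ : A → List B} {y : ℤ → B} (f : BF σ y) :
    BF (fun a => (σ a).reverse) (fun n => y (-n)) where
  a n := f.a (-n)
  j n := (σ (f.a (-n))).length - 1 - f.j (-n)
  hj n := by
    have := f.hj (-n)
    simp only [List.length_reverse]
    omega
  hy n := by
    have h := f.hy (-n)
    have hj := f.hj (-n)
    rw [List.getElem_reverse]
    rw [h]
    congr 1
    omega
  step n := by
    have hs := f.step (-(n+1))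
    rw [show -(n+1) + 1 = -n by ring] at hs
    have hj1 := f.hj (-n)
    have hj2 := f.hj (-(n+1))
    simp only [List.length_reverse]
    rcases hs with ⟨ha, hjj, hlt⟩ | ⟨heq, hz⟩
    · left
      have hL : (σ (f.a (-n))).length = (σ (f.a (-(n+1)))).length := by rw [ha]
      exact ⟨by rw [ha], by omega, by omega⟩
    · right
      exact ⟨by omega, by omega⟩

theorem periodic_rev {y : ℤ → B} (h : Periodic (fun n => y (-n))) : Periodic y := by
  obtain ⟨p, hp, hper⟩ := h
  refine ⟨p, hp, funext fun n => ?_⟩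
  have h1 := congrFun hper (-(n + p))
  simp only [] at h1
  rw [show -(-(n + (p:ℤ)) + p) = n by ring, show (-(-(n + (p:ℤ)))) = n + p by ring] at h1
  exact h1.symm

theorem leftPerm_rev {σ : A → List B} (h : RightPermutative σ) :
    LeftPermutative (fun a => (σ a).reverse) := by
  intro a b hab
  simp only [List.head?_reverse]
  exact h a b hab

theorem rev_ne {σ : A → List B} {y : ℤ → B} (f g : BF σ y)
    (h : ¬(f.a = g.a ∧ f.j = g.j)) :
    ¬((BF.rev f).a = (BF.rev g).a ∧ (BF.rev f).j = (BF.rev g).j) := by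
  rintro ⟨ha, hj⟩
  apply h
  have ha' : f.a = g.a := by
    funext n
    have h1 := congrFun ha (-n)
    simp only [BF.rev, neg_neg] at h1
    exact h1
  refine ⟨ha', funext fun n => ?_⟩
  have h1 := congrFun hj (-n)
  simp only [BF.rev, neg_neg] at h1
  have h2 := f.hj n
  have h3 := g.hj n
  have h4 : f.a n = g.a n := congrFun ha' n
  rw [h4] at h1 h2
  omega

end Recog11


open Recog in
/-- If a left or right permutative morphism admits two distinct centered
σ-representations of `y`, then `y` is periodic. -/
theorem stmt11 {A B : Type*} [Fintype A] [Fintype B]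
    (σ : A → List B) (hσ : NonErasing σ)
    (hperm : LeftPermutative σ ∨ RightPermutative σ)
    (y : ℤ → B) (k k' : ℤ) (x x' : ℤ → A)
    (h1 : IsCenteredRep σ y k x) (h2 : IsCenteredRep σ y k' x')
    (hne : ¬(k = k' ∧ x = x')) :
    Periodic y := by

  obtain ⟨f, hfk, hfa, hfp⟩ := Recog11.exists_bf hσ h1
  obtain ⟨g, hgk, hga, hgp⟩ := Recog11.exists_bf hσ h2
  have hne' : ¬(f.a = g.a ∧ f.j = g.j) := by
    rintro ⟨ha, hj⟩
    exact hne (Recog11.rep_ext hσ f g hfk hfa hfp hgk hga hgp ha hj)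
  rcases hperm with hl | hr
  · exact Recog11.core hl y f g hne'
  · exact Recog11.periodic_rev
      (Recog11.core (Recog11.leftPerm_rev hr) (fun n => y (-n))
        (Recog11.BF.rev f) (Recog11.BF.rev g) (Recog11.rev_ne f g hne'))
end

section
/- Let σ, σ̃: 𝒜 → ℬ⁺ be rotationally conjugate non-erasing morphisms between finite alphabets. Then, for each y ∈ ℬ^ℤ, the number of centered σ-representations of y equals the number of centered σ̃-representations of y. -/
open scoped BigOperators

namespace RecogAux
open Recog

variable {A B : Type*}

theorem cut_zero (σ : A → List B) (x : ℤ → A) : cut σ x 0 = 0 := by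
  simp [cut]

theorem cut_succ (σ : A → List B) (x : ℤ → A) (ℓ : ℤ) :
    cut σ x (ℓ + 1) = cut σ x ℓ + ((σ (x ℓ)).length : ℤ) := by
  rcases le_or_gt 0 ℓ with hℓ | hℓ
  · have h1 : (0:ℤ) ≤ ℓ + 1 := by omega
    have ht : (ℓ + 1).toNat = ℓ.toNat + 1 := by omega
    simp only [cut, if_pos hℓ, if_pos h1, ht, Finset.sum_range_succ]
    rw [Int.toNat_of_nonneg hℓ]
  · rcases eq_or_lt_of_le (by omega : ℓ + 1 ≤ 0) with h1 | h1
    · have hℓ' : ℓ = -1 := by omega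
      subst hℓ'
      norm_num [cut, Finset.sum_range_one]
    · have hneg : ¬ (0:ℤ) ≤ ℓ + 1 := by omega
      have hneg' : ¬ (0:ℤ) ≤ ℓ := by omega
      have ht : (-ℓ).toNat = (-(ℓ+1)).toNat + 1 := by omega
      simp only [cut, if_neg hneg, if_neg hneg', ht, Finset.sum_range_succ]
      have h2 : (-(((-(ℓ+1)).toNat : ℕ) : ℤ) - 1) = ℓ := by omega
      rw [h2]
      ring

theorem cut_congr {σ σ' : A → List B} (hlen : ∀ a, (σ a).length = (σ' a).length)
    (x : ℤ → A) (ℓ : ℤ) : cut σ x ℓ = cut σ' x ℓ := by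
  unfold cut
  split <;> simp only [hlen]

theorem int_ext {f g : ℤ → ℤ} (h0 : f 0 = g 0)
    (h : ∀ ℓ : ℤ, f (ℓ + 1) - f ℓ = g (ℓ + 1) - g ℓ) : ∀ ℓ, f ℓ = g ℓ := by
  intro ℓ
  induction ℓ using Int.induction_on with
  | zero => exact h0
  | succ i ih => have hh := h i; omega
  | pred i ih =>
      have hh := h (-(i:ℤ) - 1)
      rw [show -(i:ℤ) - 1 + 1 = -(i:ℤ) by ring] at hh
      omega

theorem cut_shiftL (σ : A → List B) (x : ℤ → A) (ℓ : ℤ) :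
    cut σ (fun n => x (n + 1)) ℓ = cut σ x (ℓ + 1) - ((σ (x 0)).length : ℤ) := by
  refine int_ext (f := fun ℓ => cut σ (fun n => x (n + 1)) ℓ)
    (g := fun ℓ => cut σ x (ℓ + 1) - ((σ (x 0)).length : ℤ)) ?_ ?_ ℓ
  · simp only [cut_zero, zero_add]
    have := cut_succ σ x 0
    rw [cut_zero, zero_add] at this
    omega
  · intro m
    rw [cut_succ σ (fun n => x (n + 1)) m, cut_succ σ x (m + 1)]
    ring

theorem cut_shiftR (σ : A → List B) (x : ℤ → A) (ℓ : ℤ) :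
    cut σ (fun n => x (n - 1)) ℓ = cut σ x (ℓ - 1) + ((σ (x (-1))).length : ℤ) := by
  refine int_ext (f := fun ℓ => cut σ (fun n => x (n - 1)) ℓ)
    (g := fun ℓ => cut σ x (ℓ - 1) + ((σ (x (-1))).length : ℤ)) ?_ ?_ ℓ
  · simp only [cut_zero, zero_sub]
    have := cut_succ σ x (-1)
    rw [show (-1 : ℤ) + 1 = 0 by ring, cut_zero] at this
    omega
  · intro m
    rw [cut_succ σ (fun n => x (n - 1)) m,
      show m + 1 - 1 = (m - 1) + 1 by ring, cut_succ σ x (m - 1)]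
    ring

theorem isSubstPt_shiftL {σ : A → List B} {x : ℤ → A} {u : ℤ → B} (h : IsSubstPt σ x u) :
    IsSubstPt σ (fun n => x (n + 1)) (fun n => u (n + ((σ (x 0)).length : ℤ))) := by
  intro ℓ j hj
  show u (cut σ (fun n => x (n + 1)) ℓ + (j:ℤ) + ((σ (x 0)).length : ℤ))
      = (σ (x (ℓ + 1))).get ⟨j, hj⟩
  rw [cut_shiftL,
    show cut σ x (ℓ + 1) - ((σ (x 0)).length : ℤ) + (j:ℤ) + ((σ (x 0)).length : ℤ)
      = cut σ x (ℓ + 1) + (j:ℤ) by ring]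
  exact h (ℓ + 1) j hj

theorem isSubstPt_shiftR {σ : A → List B} {x : ℤ → A} {u : ℤ → B} (h : IsSubstPt σ x u) :
    IsSubstPt σ (fun n => x (n - 1)) (fun n => u (n - ((σ (x (-1))).length : ℤ))) := by
  intro ℓ j hj
  show u (cut σ (fun n => x (n - 1)) ℓ + (j:ℤ) - ((σ (x (-1))).length : ℤ))
      = (σ (x (ℓ - 1))).get ⟨j, hj⟩
  rw [cut_shiftR,
    show cut σ x (ℓ - 1) + ((σ (x (-1))).length : ℤ) + (j:ℤ) - ((σ (x (-1))).length : ℤ)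
      = cut σ x (ℓ - 1) + (j:ℤ) by ring]
  exact h (ℓ - 1) j hj

section Single

variable {σ σ' : A → List B} {b : B}

theorem struct (h : ∀ a, σ a ++ [b] = b :: σ' a) (hσ : NonErasing σ) (a : A) :
    ∃ t, σ a = b :: t ∧ σ' a = t ++ [b] := by
  obtain ⟨c, t, hct⟩ := List.exists_cons_of_ne_nil (hσ a)
  have hh := h a
  rw [hct] at hh
  simp only [List.cons_append, List.cons.injEq] at hh
  exact ⟨t, by rw [hct, hh.1], hh.2.symm⟩

theorem len_eq (h : ∀ a, σ a ++ [b] = b :: σ' a) (a : A) :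
    (σ a).length = (σ' a).length := by
  have := congrArg List.length (h a)
  simpa using this

theorem nonErasing' (h : ∀ a, σ a ++ [b] = b :: σ' a) (hσ : NonErasing σ) :
    NonErasing σ' := by
  intro a
  obtain ⟨t, _, h2⟩ := struct h hσ a
  simp [h2]

theorem fwd (h : ∀ a, σ a ++ [b] = b :: σ' a) (hσ : NonErasing σ)
    {x : ℤ → A} {u : ℤ → B} (hs : IsSubstPt σ x u) :
    IsSubstPt σ' x (fun n => u (n + 1)) := by
  intro ℓ j hj
  obtain ⟨t, h1, h2⟩ := struct h hσ (x ℓ)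
  have hjt : j < t.length + 1 := by
    have := hj; rw [h2] at this; simpa using this
  show u (cut σ' x ℓ + (j:ℤ) + 1) = (σ' (x ℓ)).get ⟨j, hj⟩
  rw [← cut_congr (len_eq h) x ℓ]
  have hrhs : (σ' (x ℓ)).get ⟨j, hj⟩ = (t ++ [b])[j]'(by simpa using hjt) := by
    simp only [List.get_eq_getElem]
    congr 1 <;> simp [h2]
  rw [hrhs]
  rcases lt_or_eq_of_le (Nat.lt_succ_iff.mp hjt) with hlt | heq
  · rw [List.getElem_append_left hlt]
    have hj1 : j + 1 < (σ (x ℓ)).length := by rw [h1]; simpa using hlt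
    have := hs ℓ (j + 1) hj1
    rw [show cut σ x ℓ + (j:ℤ) + 1 = cut σ x ℓ + ((j+1 : ℕ) : ℤ) by push_cast; ring]
    rw [this]
    simp only [List.get_eq_getElem]
    simp [List.getElem_of_eq h1]
  · have hb : (t ++ [b])[j]'(by simpa using hjt) = b := by
      subst heq; simp
    rw [hb]
    have hlen : cut σ x ℓ + (j:ℤ) + 1 = cut σ x (ℓ + 1) := by
      rw [cut_succ, h1]
      simp [heq]
      push_cast
      ring
    rw [hlen]
    obtain ⟨s, g1, _⟩ := struct h hσ (x (ℓ + 1))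
    have h0 : 0 < (σ (x (ℓ + 1))).length := by rw [g1]; simp
    have := hs (ℓ + 1) 0 h0
    rw [show cut σ x (ℓ + 1) + ((0:ℕ):ℤ) = cut σ x (ℓ + 1) by push_cast; ring] at this
    rw [this]
    simp only [List.get_eq_getElem]
    simp [List.getElem_of_eq g1]

theorem bwd (h : ∀ a, σ a ++ [b] = b :: σ' a) (hσ : NonErasing σ)
    {x : ℤ → A} {u : ℤ → B} (hs : IsSubstPt σ' x u) :
    IsSubstPt σ x (fun n => u (n - 1)) := by
  intro ℓ j hj
  obtain ⟨t, h1, h2⟩ := struct h hσ (x ℓ)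
  show u (cut σ x ℓ + (j:ℤ) - 1) = (σ (x ℓ)).get ⟨j, hj⟩
  have hrhs : (σ (x ℓ)).get ⟨j, hj⟩ = (b :: t)[j]'(by
      have := hj; rw [h1] at this; simpa using this) := by
    simp only [List.get_eq_getElem]
    congr 1 <;> simp [h1]
  rw [hrhs]
  rcases j with _ | m
  · simp only [List.getElem_cons_zero]
    obtain ⟨s, g1, g2⟩ := struct h hσ (x (ℓ - 1))
    have hms : s.length < (σ' (x (ℓ - 1))).length := by rw [g2]; simp
    have key := hs (ℓ - 1) s.length hms
    have harg : cut σ' x (ℓ - 1) + (s.length : ℤ) = cut σ x ℓ + ((0:ℕ):ℤ) - 1 := by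
      rw [← cut_congr (len_eq h) x (ℓ - 1)]
      have := cut_succ σ x (ℓ - 1)
      rw [show ℓ - 1 + 1 = ℓ by ring] at this
      rw [this, g1]
      push_cast
      simp
      ring
    rw [← harg, key]
    simp only [List.get_eq_getElem]
    simp [List.getElem_of_eq g2]
  · have hmt : m < (σ' (x ℓ)).length := by
      rw [h2]
      have := hj; rw [h1] at this
      simp only [List.length_append, List.length_cons] at this ⊢
      omega
    have key := hs ℓ m hmt
    have harg : cut σ' x ℓ + (m:ℤ) = cut σ x ℓ + ((m+1:ℕ):ℤ) - 1 := by
      rw [← cut_congr (len_eq h) x ℓ]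
      push_cast
      ring
    rw [← harg, key]
    simp only [List.get_eq_getElem, List.getElem_cons_succ]
    have hmt' : m < t.length := by
      have := hj; rw [h1] at this
      simpa using Nat.lt_of_succ_lt_succ this
    rw [List.getElem_of_eq h2, List.getElem_append_left hmt']

def Fmap (σ' : A → List B) (p : ℤ × (ℤ → A)) : ℤ × (ℤ → A) :=
  if p.1 = 0 then (((σ' (p.2 (-1))).length : ℤ) - 1, fun n => p.2 (n - 1))
  else (p.1 - 1, p.2)

def Gmap (σ : A → List B) (p : ℤ × (ℤ → A)) : ℤ × (ℤ → A) :=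
  if p.1 + 1 = ((σ (p.2 0)).length : ℤ) then (0, fun n => p.2 (n + 1))
  else (p.1 + 1, p.2)

theorem F_mem (h : ∀ a, σ a ++ [b] = b :: σ' a) (hσ : NonErasing σ)
    {y : ℤ → B} {p : ℤ × (ℤ → A)} (hc : IsCenteredRep σ y p.1 p.2) :
    IsCenteredRep σ' y (Fmap σ' p).1 (Fmap σ' p).2 := by
  obtain ⟨k, x⟩ := p
  obtain ⟨hrep, hk0, hk1⟩ := hc
  dsimp only at hrep hk0 hk1
  have h' : IsSubstPt σ' x (fun n => y (n + 1 - k)) := fwd h hσ hrep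
  by_cases hk : k = 0
  · subst hk
    have hF : Fmap σ' (((0:ℤ), x) : ℤ × (ℤ → A))
        = (((σ' (x (-1))).length : ℤ) - 1, fun n => x (n - 1)) := by
      simp [Fmap]
    rw [hF]
    have hpos : 0 < (σ' (x (-1))).length :=
      List.length_pos_iff.mpr (nonErasing' h hσ (x (-1)))
    refine ⟨?_, by simp; omega, ?_⟩
    · show IsSubstPt σ' (fun n => x (n - 1))
        (fun n => y (n - (((σ' (x (-1))).length : ℤ) - 1)))
      have h2 := isSubstPt_shiftR h'
      have heq : (fun n : ℤ => y (n - (((σ' (x (-1))).length : ℤ) - 1)))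
          = fun n : ℤ => y (n - ((σ' (x (-1))).length : ℤ) + 1 - 0) := by
        funext n; congr 1; ring
      rw [heq]
      exact h2
    · show ((σ' (x (-1))).length : ℤ) - 1 < ((σ' (x ((0:ℤ) - 1))).length : ℤ)
      have e : (0:ℤ) - 1 = -1 := by norm_num
      rw [e]
      omega
  · have hF : Fmap σ' ((k, x) : ℤ × (ℤ → A)) = (k - 1, x) := by
      simp [Fmap, hk]
    rw [hF]
    refine ⟨?_, by simp; omega, ?_⟩
    · show IsSubstPt σ' x (fun n => y (n - (k - 1)))
      have heq : (fun n : ℤ => y (n - (k - 1))) = fun n : ℤ => y (n + 1 - k) := by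
        funext n; congr 1; ring
      rw [heq]
      exact h'
    · show k - 1 < ((σ' (x 0)).length : ℤ)
      have := len_eq h (x 0)
      omega

theorem G_mem (h : ∀ a, σ a ++ [b] = b :: σ' a) (hσ : NonErasing σ)
    {y : ℤ → B} {p : ℤ × (ℤ → A)} (hc : IsCenteredRep σ' y p.1 p.2) :
    IsCenteredRep σ y (Gmap σ p).1 (Gmap σ p).2 := by
  obtain ⟨k, x⟩ := p
  obtain ⟨hrep, hk0, hk1⟩ := hc
  dsimp only at hrep hk0 hk1
  have h' : IsSubstPt σ x (fun n => y (n - 1 - k)) := bwd h hσ hrep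
  have hll := len_eq h (x 0)
  by_cases hcond : k + 1 = ((σ (x 0)).length : ℤ)
  · have hG : Gmap σ ((k, x) : ℤ × (ℤ → A)) = (0, fun n => x (n + 1)) := by
      simp [Gmap, hcond]
    rw [hG]
    refine ⟨?_, le_refl 0, ?_⟩
    · show IsSubstPt σ (fun n => x (n + 1)) (fun n => y (n - 0))
      have h2 := isSubstPt_shiftL h'
      have heq : (fun n : ℤ => y (n - 0))
          = fun n : ℤ => y (n + ((σ (x 0)).length : ℤ) - 1 - k) := by
        funext n; congr 1; omega
      rw [heq]
      exact h2
    · show (0:ℤ) < ((σ (x ((0:ℤ) + 1))).length : ℤ)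
      exact_mod_cast List.length_pos_iff.mpr (hσ (x ((0:ℤ) + 1)))
  · have hG : Gmap σ ((k, x) : ℤ × (ℤ → A)) = (k + 1, x) := by
      simp [Gmap, hcond]
    rw [hG]
    refine ⟨?_, by simp; omega, ?_⟩
    · show IsSubstPt σ x (fun n => y (n - (k + 1)))
      have heq : (fun n : ℤ => y (n - (k + 1))) = fun n : ℤ => y (n - 1 - k) := by
        funext n; congr 1; ring
      rw [heq]
      exact h'
    · show k + 1 < ((σ (x 0)).length : ℤ)
      omega

theorem GF (h : ∀ a, σ a ++ [b] = b :: σ' a) (hσ : NonErasing σ)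
    {y : ℤ → B} {p : ℤ × (ℤ → A)} (hc : IsCenteredRep σ y p.1 p.2) :
    Gmap σ (Fmap σ' p) = p := by
  obtain ⟨k, x⟩ := p
  obtain ⟨_, hk0, hk1⟩ := hc
  dsimp only at hk0 hk1
  by_cases hk : k = 0
  · subst hk
    have hll := len_eq h (x (-1))
    have hF : Fmap σ' (((0:ℤ), x) : ℤ × (ℤ → A))
        = (((σ' (x (-1))).length : ℤ) - 1, fun n => x (n - 1)) := by
      simp [Fmap]
    have hG2 : Gmap σ (((((σ' (x (-1))).length : ℤ) - 1, fun n => x (n - 1)))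
          : ℤ × (ℤ → A)) = ((0:ℤ), x) := by
      simp [Gmap, hll]
    rw [hF, hG2]
  · have hF : Fmap σ' ((k, x) : ℤ × (ℤ → A)) = (k - 1, x) := by
      simp [Fmap, hk]
    have hne : k ≠ ((σ (x 0)).length : ℤ) := by omega
    have hG2 : Gmap σ ((k - 1, x) : ℤ × (ℤ → A)) = (k, x) := by
      simp [Gmap, hne]
    rw [hF, hG2]

theorem FG (h : ∀ a, σ a ++ [b] = b :: σ' a) (hσ : NonErasing σ)
    {y : ℤ → B} {p : ℤ × (ℤ → A)} (hc : IsCenteredRep σ' y p.1 p.2) :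
    Fmap σ' (Gmap σ p) = p := by
  obtain ⟨k, x⟩ := p
  obtain ⟨_, hk0, hk1⟩ := hc
  dsimp only at hk0 hk1
  have hll := len_eq h (x 0)
  by_cases hcond : k + 1 = ((σ (x 0)).length : ℤ)
  · have hG : Gmap σ ((k, x) : ℤ × (ℤ → A)) = (0, fun n => x (n + 1)) := by
      simp [Gmap, hcond]
    have hF2 : Fmap σ' (((0:ℤ), fun n => x (n + 1)) : ℤ × (ℤ → A))
        = (((σ' (x 0)).length : ℤ) - 1, x) := by
      simp [Fmap]
    rw [hG, hF2]
    have : ((σ' (x 0)).length : ℤ) - 1 = k := by omega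
    rw [this]
  · have hG : Gmap σ ((k, x) : ℤ × (ℤ → A)) = (k + 1, x) := by
      simp [Gmap, hcond]
    have hne : k + 1 ≠ (0:ℤ) := by omega
    have hF2 : Fmap σ' ((k + 1, x) : ℤ × (ℤ → A)) = (k, x) := by
      simp [Fmap, hne]
    rw [hG, hF2]

theorem card_single (h : ∀ a, σ a ++ [b] = b :: σ' a) (hσ : NonErasing σ) (y : ℤ → B) :
    Cardinal.mk {p : ℤ × (ℤ → A) // IsCenteredRep σ y p.1 p.2} =
      Cardinal.mk {p : ℤ × (ℤ → A) // IsCenteredRep σ' y p.1 p.2} := by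
  apply Cardinal.mk_congr
  exact
    { toFun := fun p => ⟨Fmap σ' p.1, F_mem h hσ p.2⟩
      invFun := fun q => ⟨Gmap σ q.1, G_mem h hσ q.2⟩
      left_inv := fun p => Subtype.ext (GF h hσ p.2)
      right_inv := fun q => Subtype.ext (FG h hσ q.2) }

end Single

theorem card_word (w : List B) : ∀ (σ σ' : A → List B), NonErasing σ →
    (∀ a, σ a ++ w = w ++ σ' a) → ∀ y : ℤ → B,
    Cardinal.mk {p : ℤ × (ℤ → A) // IsCenteredRep σ y p.1 p.2} =
      Cardinal.mk {p : ℤ × (ℤ → A) // IsCenteredRep σ' y p.1 p.2} := by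
  induction w with
  | nil =>
      intro σ σ' hσ h y
      have : σ = σ' := funext fun a => by simpa using h a
      rw [this]
  | cons b t ih =>
      intro σ σ' hσ h y
      have hhead : ∀ a, σ a = b :: (σ a).tail := by
        intro a
        obtain ⟨c, s, hcs⟩ := List.exists_cons_of_ne_nil (hσ a)
        have hh := h a
        rw [hcs] at hh
        simp only [List.cons_append, List.cons.injEq] at hh
        rw [hcs, hh.1]
        simp
      set τ : A → List B := fun a => (σ a).tail ++ [b] with hτdef
      have h1 : ∀ a, σ a ++ [b] = b :: τ a := by
        intro a
        conv_lhs => rw [hhead a]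
        simp [hτdef]
      have hτ : NonErasing τ := fun a => by simp [hτdef]
      have h2 : ∀ a, τ a ++ t = t ++ σ' a := by
        intro a
        have hh := h a
        rw [hhead a] at hh
        simp only [List.cons_append, List.cons.injEq] at hh
        calc τ a ++ t = (σ a).tail ++ ([b] ++ t) := by simp [hτdef]
          _ = (σ a).tail ++ (b :: t) := by simp
          _ = t ++ σ' a := hh.2
      exact (card_single h1 hσ y).trans (ih τ σ' hτ h2 y)

end RecogAux

open Recog in
/-- Rotationally conjugate morphisms give each `y` equally many centered
representations. -/
theorem stmt12 {A B : Type*} [Fintype A] [Fintype B]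
    (σ σ' : A → List B) (hσ : NonErasing σ) (hσ' : NonErasing σ')
    (hconj : RotConj σ σ') (y : ℤ → B) :
    Cardinal.mk {p : ℤ × (ℤ → A) // IsCenteredRep σ y p.1 p.2} =
      Cardinal.mk {p : ℤ × (ℤ → A) // IsCenteredRep σ' y p.1 p.2} := by
  rcases hconj with ⟨w, h | h⟩
  · exact RecogAux.card_word w σ σ' hσ h y
  · exact (RecogAux.card_word w σ' σ hσ' (fun a => (h a).symm) y).symm
end

section
/- Let σ: 𝒜 → ℬ⁺ and τ: ℬ → 𝒞⁺ be non-erasing morphisms between finite alphabets, let X ⊆ 𝒜^ℤ be a shift, and let Y = ∪_{k∈ℤ} T^k σ(X). Then: (1) τ∘σ is recognizable in X if and only if σ is recognizable in X and τ is recognizable in Y; (2) if σ is recognizable in X for aperiodic points and τ is recognizable in Y for aperiodic points, then τ∘σ is recognizable in X for aperiodic points; (3) if τ∘σ is recognizable in X for aperiodic points, then τ is recognizable in Y for aperiodic points. -/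
open scoped BigOperators

namespace RecogProof
open Recog

variable {A B C : Type*}

lemma int_ext {f g : ℤ → ℤ} (h0 : f 0 = g 0)
    (h : ∀ ℓ : ℤ, f (ℓ + 1) - f ℓ = g (ℓ + 1) - g ℓ) : ∀ ℓ, f ℓ = g ℓ := by
  intro ℓ
  induction ℓ using Int.induction_on with
  | zero => exact h0
  | succ n ih => have := h n; omega
  | pred n ih =>
    have h' := h (-(n : ℤ) - 1)
    have e : (-(n : ℤ) - 1) + 1 = -(n : ℤ) := by ring
    rw [e] at h'
    omega

lemma cut_zero (σ : A → List B) (x : ℤ → A) : cut σ x 0 = 0 := by simp [cut]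

lemma cut_succ (σ : A → List B) (x : ℤ → A) (ℓ : ℤ) :
    cut σ x (ℓ + 1) = cut σ x ℓ + ((σ (x ℓ)).length : ℤ) := by
  rcases le_or_gt 0 ℓ with h | h
  · rw [cut, cut, if_pos (by omega), if_pos h]
    have e : (ℓ + 1).toNat = ℓ.toNat + 1 := by omega
    rw [e, Finset.sum_range_succ, Int.toNat_of_nonneg h]
  · rcases eq_or_lt_of_le (show ℓ + 1 ≤ 0 by omega) with h1 | h1
    · have e : ℓ = -1 := by omega
      subst e
      rw [cut, cut, if_pos (by omega), if_neg (by omega)]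
      simp
    · rw [cut, cut, if_neg (by omega), if_neg (by omega)]
      have e : (-ℓ).toNat = (-(ℓ + 1)).toNat + 1 := by omega
      rw [e, Finset.sum_range_succ]
      have e2 : -(((-(ℓ + 1)).toNat : ℤ)) - 1 = ℓ := by omega
      rw [e2]
      ring

lemma cut_add_nat (σ : A → List B) (x : ℤ → A) (s : ℤ) (n : ℕ) :
    cut σ x (s + n) = cut σ x s + ∑ i ∈ Finset.range n, ((σ (x (s + i))).length : ℤ) := by
  induction n with
  | zero => simp
  | succ n ih =>
    have e : s + (((n : ℕ) + 1 : ℕ) : ℤ) = (s + n) + 1 := by push_cast; ring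
    rw [e, cut_succ, ih, Finset.sum_range_succ]
    ring

lemma sub_le_cut_sub {σ : A → List B} (hσ : NonErasing σ) (x : ℤ → A) {m n : ℤ} (h : m ≤ n) :
    n - m ≤ cut σ x n - cut σ x m := by
  have e : n = m + ((n - m).toNat : ℕ) := by omega
  rw [e, cut_add_nat]
  have hsum : ((n - m).toNat : ℤ) ≤ ∑ i ∈ Finset.range (n - m).toNat, ((σ (x (m + i))).length : ℤ) := by
    calc ((n - m).toNat : ℤ) = ∑ _i ∈ Finset.range (n - m).toNat, (1 : ℤ) := by simp
    _ ≤ _ := Finset.sum_le_sum (fun i _ => by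
        have := List.length_pos_iff.mpr (hσ (x (m + i)))
        exact_mod_cast this)
  omega

lemma cut_lt_cut {σ : A → List B} (hσ : NonErasing σ) (x : ℤ → A) {m n : ℤ} (h : m < n) :
    cut σ x m < cut σ x n := by
  have := sub_le_cut_sub hσ x (le_of_lt h)
  omega

lemma cut_le_cut {σ : A → List B} (hσ : NonErasing σ) (x : ℤ → A) {m n : ℤ} (h : m ≤ n) :
    cut σ x m ≤ cut σ x n := by
  have := sub_le_cut_sub hσ x h
  omega

lemma cut_inj {σ : A → List B} (hσ : NonErasing σ) (x : ℤ → A) {m n : ℤ}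
    (h : cut σ x m = cut σ x n) : m = n := by
  rcases lt_trichotomy m n with h1 | h1 | h1
  · have := cut_lt_cut hσ x h1; omega
  · exact h1
  · have := cut_lt_cut hσ x h1; omega

lemma le_cut {σ : A → List B} (hσ : NonErasing σ) (x : ℤ → A) {ℓ : ℤ} (h : 0 ≤ ℓ) :
    ℓ ≤ cut σ x ℓ := by
  have := sub_le_cut_sub hσ x h
  have := cut_zero σ x
  omega

lemma cut_le {σ : A → List B} (hσ : NonErasing σ) (x : ℤ → A) {ℓ : ℤ} (h : ℓ ≤ 0) :
    cut σ x ℓ ≤ ℓ := by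
  have := sub_le_cut_sub hσ x h
  have := cut_zero σ x
  omega

lemma exists_block {σ : A → List B} (hσ : NonErasing σ) (x : ℤ → A) (n : ℤ) :
    ∃ ℓ, cut σ x ℓ ≤ n ∧ n < cut σ x (ℓ + 1) := by
  obtain ⟨ℓ, hℓ, hmax⟩ := Int.exists_greatest_of_bdd (P := fun z => cut σ x z ≤ n)
    ⟨max n 0, fun z hz => by
      rcases le_or_gt 0 z with h | h
      · have := le_cut hσ x h; omega
      · omega⟩
    ⟨min n 0, by
      rcases le_or_gt 0 n with h | h
      · have e : min n 0 = 0 := by omega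
        rw [e, cut_zero]
        omega
      · have e : min n 0 = n := by omega
        rw [e]
        have := cut_le hσ x (show n ≤ 0 by omega)
        omega⟩
  refine ⟨ℓ, hℓ, ?_⟩
  by_contra hcon
  have := hmax (ℓ + 1) (by omega)
  omega

lemma block_unique {σ : A → List B} (hσ : NonErasing σ) (x : ℤ → A) {n ℓ ℓ' : ℤ}
    (h1 : cut σ x ℓ ≤ n) (h2 : n < cut σ x (ℓ + 1))
    (h1' : cut σ x ℓ' ≤ n) (h2' : n < cut σ x (ℓ' + 1)) : ℓ = ℓ' := by
  rcases lt_trichotomy ℓ ℓ' with h | h | h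
  · have := cut_le_cut hσ x (show ℓ + 1 ≤ ℓ' by omega); omega
  · exact h
  · have := cut_le_cut hσ x (show ℓ' + 1 ≤ ℓ by omega); omega

lemma cut_shift (σ : A → List B) (x : ℤ → A) (s : ℤ) :
    ∀ m, cut σ (fun n => x (n + s)) m = cut σ x (s + m) - cut σ x s := by
  refine int_ext ?_ ?_
  · simp [cut_zero]
  · intro ℓ
    rw [cut_succ, show s + (ℓ + 1) = (s + ℓ) + 1 by ring, cut_succ]
    have e : x (ℓ + s) = x (s + ℓ) := congrArg x (by ring)
    simp only [e]
    ring

lemma isSubstPt_shift {σ : A → List B} {x : ℤ → A} {y : ℤ → B}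
    (h : IsSubstPt σ x y) (s : ℤ) :
    IsSubstPt σ (fun n => x (n + s)) (fun n => y (n + cut σ x s)) := by
  intro ℓ j hj
  have key := h (ℓ + s) j hj
  have e : cut σ (fun n => x (n + s)) ℓ + j + cut σ x s = cut σ x (ℓ + s) + j := by
    rw [cut_shift, show s + ℓ = ℓ + s by ring]; ring
  show y (cut σ (fun n => x (n + s)) ℓ + j + cut σ x s) = _
  rw [e, key]

lemma block_data {σ : A → List B} (hσ : NonErasing σ) (x : ℤ → A) (n : ℤ) :
    ∃ (ℓ : ℤ) (j : ℕ) (hj : j < (σ (x ℓ)).length), n = cut σ x ℓ + j := by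
  obtain ⟨ℓ, h1, h2⟩ := exists_block hσ x n
  refine ⟨ℓ, (n - cut σ x ℓ).toNat, ?_, by omega⟩
  have := cut_succ σ x ℓ
  omega

lemma substPt_unique {σ : A → List B} (hσ : NonErasing σ) {x : ℤ → A} {y y' : ℤ → B}
    (h1 : IsSubstPt σ x y) (h2 : IsSubstPt σ x y') : y = y' := by
  funext n
  obtain ⟨ℓ, j, hj, rfl⟩ := block_data hσ x n
  rw [h1 ℓ j hj, h2 ℓ j hj]

noncomputable def bIdx {σ : A → List B} (hσ : NonErasing σ) (x : ℤ → A) (n : ℤ) : ℤ :=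
  (exists_block hσ x n).choose

lemma bIdx_le {σ : A → List B} (hσ : NonErasing σ) (x : ℤ → A) (n : ℤ) :
    cut σ x (bIdx hσ x n) ≤ n := (exists_block hσ x n).choose_spec.1

lemma lt_bIdx {σ : A → List B} (hσ : NonErasing σ) (x : ℤ → A) (n : ℤ) :
    n < cut σ x (bIdx hσ x n + 1) := (exists_block hσ x n).choose_spec.2

noncomputable def substPt (σ : A → List B) (hσ : NonErasing σ) (x : ℤ → A) (n : ℤ) : B :=
  (σ (x (bIdx hσ x n))).getD (n - cut σ x (bIdx hσ x n)).toNat ((σ (x 0)).head (hσ (x 0)))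

lemma get_congr {l l' : List C} (h : l = l') {j : ℕ} (hj : j < l.length) :
    l.get ⟨j, hj⟩ = l'.get ⟨j, h ▸ hj⟩ := by subst h; rfl

lemma isSubstPt_substPt (σ : A → List B) (hσ : NonErasing σ) (x : ℤ → A) :
    IsSubstPt σ x (substPt σ hσ x) := by
  intro ℓ j hj
  have h1 := bIdx_le hσ x (cut σ x ℓ + (j : ℤ))
  have h2 := lt_bIdx hσ x (cut σ x ℓ + (j : ℤ))
  have hs := cut_succ σ x ℓ
  have hℓ : bIdx hσ x (cut σ x ℓ + (j : ℤ)) = ℓ :=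
    block_unique hσ x h1 h2 (by omega) (by omega)
  show (σ (x (bIdx hσ x (cut σ x ℓ + (j : ℤ))))).getD
      ((cut σ x ℓ + (j : ℤ) - cut σ x (bIdx hσ x (cut σ x ℓ + (j : ℤ)))).toNat)
      ((σ (x 0)).head (hσ (x 0))) = (σ (x ℓ)).get ⟨j, hj⟩
  rw [hℓ]
  have e : cut σ x ℓ + (j : ℤ) - cut σ x ℓ = (j : ℤ) := by ring
  rw [e, Int.toNat_natCast, List.getD_eq_getElem _ _ hj]
  simp

lemma wordApply_append (τ : B → List C) (u v : List B) :
    wordApply τ (u ++ v) = wordApply τ u ++ wordApply τ v := by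
  induction u with
  | nil => simp [wordApply]
  | cons a u ih => simp [wordApply, ih]

lemma wordApply_take_succ (τ : B → List C) (w : List B) (i : ℕ) (hi : i < w.length) :
    (wordApply τ (w.take (i + 1))).length
      = (wordApply τ (w.take i)).length + (τ w[i]).length := by
  rw [List.take_succ, wordApply_append, List.getElem?_eq_getElem hi]
  simp [wordApply]

lemma wordApply_getElem (τ : B → List C) (w : List B) (j : ℕ)
    (hj : j < (wordApply τ w).length) :
    ∃ (i : ℕ) (hi : i < w.length) (r : ℕ) (hr : r < (τ w[i]).length),
      (j : ℤ) = ((wordApply τ (w.take i)).length : ℤ) + r ∧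
      (wordApply τ w).get ⟨j, hj⟩ = (τ w[i]).get ⟨r, hr⟩ := by
  induction w generalizing j with
  | nil => simp [wordApply] at hj
  | cons a w ih =>
    have hsplit : wordApply τ (a :: w) = τ a ++ wordApply τ w := rfl
    by_cases h : j < (τ a).length
    · refine ⟨0, by simp, j, h, by simp [wordApply], ?_⟩
      simp only [List.get_eq_getElem, hsplit]
      rw [List.getElem_append_left h]
      simp
    · push_neg at h
      have hj2 : j - (τ a).length < (wordApply τ w).length := by
        rw [hsplit] at hj; simp at hj; omega
      obtain ⟨i, hi, r, hr, heq, hval⟩ := ih (j - (τ a).length) hj2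
      refine ⟨i + 1, by simpa using Nat.succ_lt_succ hi, r, ?_, ?_, ?_⟩
      · simpa using hr
      · have : (wordApply τ ((a :: w).take (i + 1))).length
            = (τ a).length + (wordApply τ (w.take i)).length := by
          simp [List.take_succ_cons, wordApply]
        rw [this]
        push_cast
        omega
      · simp only [List.get_eq_getElem, hsplit]
        rw [List.getElem_append_right h]
        simpa using hval

lemma wordApply_take_length {σ : A → List B} {τ : B → List C} {x : ℤ → A} {w : ℤ → B}
    (hw : IsSubstPt σ x w) (ℓ : ℤ) (i : ℕ) (hi : i ≤ (σ (x ℓ)).length) :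
    ((wordApply τ ((σ (x ℓ)).take i)).length : ℤ)
      = cut τ w (cut σ x ℓ + i) - cut τ w (cut σ x ℓ) := by
  induction i with
  | zero => simp [wordApply]
  | succ i ihi =>
    have hi' : i < (σ (x ℓ)).length := by omega
    rw [wordApply_take_succ τ _ i hi']
    have := hw ℓ i hi'
    have e : cut σ x ℓ + ((i : ℤ) + 1) = (cut σ x ℓ + i) + 1 := by ring
    push_cast
    rw [e, cut_succ, ihi (by omega)]
    have hwv : w (cut σ x ℓ + i) = (σ (x ℓ))[i] := by
      rw [this]; simp
    rw [hwv]
    push_cast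
    ring

lemma wordApply_full_length {σ : A → List B} {τ : B → List C} {x : ℤ → A} {w : ℤ → B}
    (hw : IsSubstPt σ x w) (ℓ : ℤ) :
    ((wordApply τ (σ (x ℓ))).length : ℤ)
      = cut τ w (cut σ x ℓ + (σ (x ℓ)).length) - cut τ w (cut σ x ℓ) := by
  have := wordApply_take_length (τ := τ) hw ℓ (σ (x ℓ)).length le_rfl
  rwa [List.take_length] at this

lemma cut_comp {σ : A → List B} {τ : B → List C} {x : ℤ → A} {w : ℤ → B}
    (hw : IsSubstPt σ x w) :
    ∀ ℓ, cut (comp τ σ) x ℓ = cut τ w (cut σ x ℓ) := by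
  refine int_ext ?_ ?_
  · simp [cut_zero]
  · intro ℓ
    rw [cut_succ, cut_succ]
    have := wordApply_full_length (τ := τ) hw ℓ
    simp only [comp]
    omega

lemma isSubstPt_comp {σ : A → List B} {τ : B → List C} {x : ℤ → A} {w : ℤ → B} {z : ℤ → C}
    (hw : IsSubstPt σ x w) (hz : IsSubstPt τ w z) :
    IsSubstPt (comp τ σ) x z := by
  intro ℓ j hj
  obtain ⟨i, hi, r, hr, heq, hval⟩ := wordApply_getElem τ (σ (x ℓ)) j hj
  have hwv : w (cut σ x ℓ + i) = (σ (x ℓ))[i] := by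
    rw [hw ℓ i hi]; simp
  have hr' : r < (τ (w (cut σ x ℓ + i))).length := by rw [hwv]; exact hr
  have key := hz (cut σ x ℓ + i) r hr'
  have hidx : cut (comp τ σ) x ℓ + j = cut τ w (cut σ x ℓ + i) + r := by
    rw [cut_comp hw, heq, wordApply_take_length (τ := τ) hw ℓ i (le_of_lt hi)]
    ring
  rw [hidx, key, get_congr (congrArg τ hwv) hr']
  exact hval.symm

lemma nonErasing_comp {σ : A → List B} {τ : B → List C}
    (hσ : NonErasing σ) (hτ : NonErasing τ) : NonErasing (comp τ σ) := by
  intro a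
  have := hσ a
  rcases hu : σ a with _ | ⟨b, u⟩
  · exact absurd hu this
  · simp only [comp, hu, wordApply]
    have := hτ b
    intro hcon
    rw [List.append_eq_nil_iff] at hcon
    exact this hcon.1

lemma substPt_periodic {τ : B → List C} (hτ : NonErasing τ) {w : ℤ → B} {v : ℤ → C}
    (hwv : IsSubstPt τ w v) (p : ℕ) (hper : ∀ n, w (n + p) = w n) :
    ∀ n, v (n + cut τ w p) = v n := by
  have hq : ∀ ℓ, cut τ w (ℓ + p) = cut τ w ℓ + cut τ w p := by
    have := int_ext (f := fun ℓ => cut τ w (ℓ + p) - cut τ w ℓ) (g := fun _ => cut τ w p)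
      (by simp [cut_zero]) ?_
    · intro ℓ; have := this ℓ; omega
    · intro ℓ
      rw [show ℓ + 1 + p = (ℓ + p) + 1 by ring, cut_succ, cut_succ, hper ℓ]
      ring
  intro n
  obtain ⟨ℓ, j, hj, rfl⟩ := block_data hτ w n
  have hj' : j < (τ (w (ℓ + p))).length := by rw [hper ℓ]; exact hj
  have k1 := hwv ℓ j hj
  have k2 := hwv (ℓ + p) j hj'
  have e : cut τ w ℓ + (j : ℤ) + cut τ w p = cut τ w (ℓ + p) + j := by
    have := hq ℓ; omega
  rw [e, k2, k1, get_congr (congrArg τ (hper ℓ)) hj']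



lemma cut_one (σ : A → List B) (x : ℤ → A) : cut σ x 1 = ((σ (x 0)).length : ℤ) := by
  have := cut_succ σ x 0
  rw [cut_zero] at this
  norm_num at this
  exact this

lemma mem_shiftZ {X : Set (ℤ → A)} (hXinv : ShiftInvariant X) {x : ℤ → A} (hx : x ∈ X) :
    ∀ s : ℤ, (fun n => x (n + s)) ∈ X := by
  intro s
  induction s using Int.induction_on with
  | zero => simpa using hx
  | succ n ih =>
    have h2 := (hXinv _ ih).1
    convert h2 using 1
    funext m
    show x _ = x _
    congr 1
    push_cast
    ring
  | pred n ih =>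
    have h2 := (hXinv _ ih).2
    convert h2 using 1
    funext m
    show x _ = x _
    congr 1
    push_cast
    ring

section Main

variable {σ : A → List B} {τ : B → List C}

lemma lemA (hσ : NonErasing σ) (hτ : NonErasing τ) {z : ℤ → C} {k : ℤ} {x : ℤ → A}
    (hc : IsCenteredRep (comp τ σ) z k x) :
    ∃ ℓ j : ℤ,
      IsCenteredRep σ (fun n => substPt σ hσ x (n + ℓ)) ℓ x ∧
      IsCenteredRep τ z j (fun n => substPt σ hσ x (n + ℓ)) ∧
      k = cut τ (substPt σ hσ x) ℓ + j ∧
      (Aperiodic z → Aperiodic (fun n => substPt σ hσ x (n + ℓ))) := by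
  obtain ⟨hrep, hk0, hk1⟩ := hc
  set w := substPt σ hσ x with hwdef
  have hw : IsSubstPt σ x w := isSubstPt_substPt σ hσ x
  set v := substPt τ hτ w with hvdef
  have hv : IsSubstPt τ w v := isSubstPt_substPt τ hτ w
  have hcomp : IsSubstPt (comp τ σ) x v := isSubstPt_comp hw hv
  have hne : NonErasing (comp τ σ) := nonErasing_comp hσ hτ
  have hzv : (fun n => z (n - k)) = v := substPt_unique hne hrep hcomp
  have hzv' : ∀ m, z m = v (m + k) := by
    intro m
    have := congrFun hzv (m + k)
    simpa [add_sub_cancel_right] using this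
  have hk1' : k < cut τ w ((σ (x 0)).length : ℤ) := by
    have e1 := cut_one (comp τ σ) x
    have e2 := cut_comp (τ := τ) hw 1
    rw [cut_one σ x] at e2
    omega
  obtain ⟨ℓ, hb1, hb2⟩ := exists_block hτ w k
  have hs := cut_succ τ w ℓ
  have hℓ0 : 0 ≤ ℓ := by
    by_contra h
    push_neg at h
    have := cut_le hτ w (show ℓ + 1 ≤ 0 by omega)
    omega
  have hℓlt : ℓ < ((σ (x 0)).length : ℤ) := by
    by_contra h
    push_neg at h
    have := cut_le_cut hτ w h
    omega
  have hrepσ : IsRep σ (fun n => w (n + ℓ)) ℓ x := by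
    show IsSubstPt σ x fun n => w (n - ℓ + ℓ)
    have e : (fun n : ℤ => w (n - ℓ + ℓ)) = w := by
      funext n; congr 1; ring
    rw [e]
    exact hw
  refine ⟨ℓ, k - cut τ w ℓ, ⟨hrepσ, hℓ0, hℓlt⟩, ⟨?_, by omega, ?_⟩, by omega, ?_⟩
  · show IsSubstPt τ (fun n => w (n + ℓ)) fun n => z (n - (k - cut τ w ℓ))
    have hsh := isSubstPt_shift hv ℓ
    have e : (fun n : ℤ => z (n - (k - cut τ w ℓ))) = fun n => v (n + cut τ w ℓ) := by
      funext n
      rw [hzv' (n - (k - cut τ w ℓ))]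
      congr 1
      ring
    rw [e]
    exact hsh
  · show k - cut τ w ℓ < ((τ (w (0 + ℓ))).length : ℤ)
    rw [zero_add]
    omega
  · intro haz p hp heq
    have hperw : ∀ m, w (m + p) = w m := by
      intro m
      have := congrFun heq (m - ℓ)
      simp only [] at this
      have e1 : m - ℓ + (p : ℤ) + ℓ = m + p := by ring
      have e2 : m - ℓ + ℓ = m := by ring
      rw [e1, e2] at this
      exact this
    have hqper := substPt_periodic hτ hv p hperw
    have hq1 : (p : ℤ) ≤ cut τ w p := le_cut hτ w (by positivity)
    refine haz (cut τ w p).toNat (by omega) ?_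
    funext n
    show z (n + ((cut τ w p).toNat : ℤ)) = z n
    rw [Int.toNat_of_nonneg (by omega)]
    rw [hzv' (n + cut τ w p), hzv' n]
    have e : n + cut τ w p + k = (n + k) + cut τ w p := by ring
    rw [e, hqper (n + k)]

lemma lemB (hσ : NonErasing σ) (hτ : NonErasing τ) {y : ℤ → B} {k : ℤ} {x : ℤ → A}
    (hc : IsCenteredRep σ y k x) :
    IsCenteredRep (comp τ σ) (substPt τ hτ y) (cut τ (substPt σ hσ x) k) x := by
  obtain ⟨hrep, hk0, hk1⟩ := hc
  set w := substPt σ hσ x with hwdef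
  have hw : IsSubstPt σ x w := isSubstPt_substPt σ hσ x
  set v := substPt τ hτ w with hvdef
  have hv : IsSubstPt τ w v := isSubstPt_substPt τ hτ w
  have hcomp : IsSubstPt (comp τ σ) x v := isSubstPt_comp hw hv
  set z := substPt τ hτ y with hzdef
  have hz : IsSubstPt τ y z := isSubstPt_substPt τ hτ y
  have hweq : (fun n => y (n - k)) = w := substPt_unique hσ hrep hw
  have hyw : (fun n : ℤ => w (n + k)) = y := by
    funext n
    have := congrFun hweq (n + k)
    simpa [add_sub_cancel_right] using this.symm
  have hsh := isSubstPt_shift hv k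
  rw [hyw] at hsh
  have hzeq : z = fun n => v (n + cut τ w k) := substPt_unique hτ hz hsh
  refine ⟨?_, ?_, ?_⟩
  · show IsSubstPt (comp τ σ) x fun n => z (n - cut τ w k)
    have e : (fun n : ℤ => z (n - cut τ w k)) = v := by
      funext n
      rw [hzeq]
      show v (n - cut τ w k + cut τ w k) = v n
      congr 1
      ring
    rw [e]
    exact hcomp
  · have := cut_le_cut hτ w hk0
    rw [cut_zero] at this
    exact this
  · have h1 : ((comp τ σ (x 0)).length : ℤ) = cut τ w ((σ (x 0)).length : ℤ) := by
      have e1 := cut_one (comp τ σ) x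
      have e2 := cut_comp (τ := τ) hw 1
      rw [cut_one σ x] at e2
      omega
    rw [h1]
    exact cut_lt_cut hτ w hk1

lemma lemC (hσ : NonErasing σ) (hτ : NonErasing τ) {X : Set (ℤ → A)}
    (hXinv : ShiftInvariant X) {z : ℤ → C} {j k : ℤ} {y : ℤ → B} {x : ℤ → A}
    (hx : x ∈ X) (hyrep : IsRep σ y k x) (hc : IsCenteredRep τ z j y) :
    ∃ (x₁ : ℤ → A) (k₁ c : ℤ), x₁ ∈ X ∧
      IsCenteredRep (comp τ σ) z c x₁ ∧
      (∀ m, y m = substPt σ hσ x₁ (m + k₁)) ∧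
      c = j + cut τ (substPt σ hσ x₁) k₁ ∧
      0 ≤ k₁ ∧ k₁ + 1 ≤ ((σ (x₁ 0)).length : ℤ) := by
  obtain ⟨hzrep, hj0, hj1⟩ := hc
  set w := substPt σ hσ x with hwdef
  have hw : IsSubstPt σ x w := isSubstPt_substPt σ hσ x
  have hweq : (fun n => y (n - k)) = w := substPt_unique hσ hyrep hw
  have hyw : ∀ m, y m = w (m + k) := by
    intro m
    have := congrFun hweq (m + k)
    simpa [add_sub_cancel_right] using this
  obtain ⟨ℓ, hb1, hb2⟩ := exists_block hσ x k
  have hsx := cut_succ σ x ℓ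
  set x₁ : ℤ → A := fun n => x (n + ℓ) with hx₁def
  have hx₁ : x₁ ∈ X := mem_shiftZ hXinv hx ℓ
  set k₁ := k - cut σ x ℓ with hk₁def
  set w₁ := substPt σ hσ x₁ with hw₁def
  have hw₁ : IsSubstPt σ x₁ w₁ := isSubstPt_substPt σ hσ x₁
  have hw₁eq : w₁ = fun n => w (n + cut σ x ℓ) := substPt_unique hσ hw₁ (isSubstPt_shift hw ℓ)
  have hyw₁ : ∀ m, y m = w₁ (m + k₁) := by
    intro m
    rw [hw₁eq, hyw m]
    show w (m + k) = w (m + k₁ + cut σ x ℓ)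
    congr 1
    omega
  have hx₁0 : x₁ 0 = x ℓ := by
    show x (0 + ℓ) = x ℓ
    rw [zero_add]
  have hk₁0 : 0 ≤ k₁ := by omega
  have hk₁1 : k₁ + 1 ≤ ((σ (x₁ 0)).length : ℤ) := by rw [hx₁0]; omega
  set v₁ := substPt τ hτ w₁ with hv₁def
  have hv₁ : IsSubstPt τ w₁ v₁ := isSubstPt_substPt τ hτ w₁
  have hcomp : IsSubstPt (comp τ σ) x₁ v₁ := isSubstPt_comp hw₁ hv₁
  have hyfun : (fun n : ℤ => w₁ (n + k₁)) = y := by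
    funext n
    exact (hyw₁ n).symm
  have hsh := isSubstPt_shift hv₁ k₁
  rw [hyfun] at hsh
  have hzeq : (fun n => z (n - j)) = fun n => v₁ (n + cut τ w₁ k₁) :=
    substPt_unique hτ hzrep hsh
  have hzv : ∀ m, z m = v₁ (m + j + cut τ w₁ k₁) := by
    intro m
    have := congrFun hzeq (m + j)
    simpa [add_sub_cancel_right] using this
  set c := j + cut τ w₁ k₁ with hcdef
  have hsw₁ := cut_succ τ w₁ k₁
  have hy0 : y 0 = w₁ k₁ := by
    rw [hyw₁ 0]
    congr 1
    ring
  refine ⟨x₁, k₁, c, hx₁, ⟨?_, ?_, ?_⟩, hyw₁, rfl, hk₁0, hk₁1⟩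
  · show IsSubstPt (comp τ σ) x₁ fun n => z (n - c)
    have e : (fun n : ℤ => z (n - c)) = v₁ := by
      funext n
      rw [hzv (n - c)]
      congr 1
      omega
    rw [e]
    exact hcomp
  · have := cut_le_cut hτ w₁ hk₁0
    rw [cut_zero] at this
    omega
  · have h1 : ((comp τ σ (x₁ 0)).length : ℤ) = cut τ w₁ ((σ (x₁ 0)).length : ℤ) := by
      have e1 := cut_one (comp τ σ) x₁
      have e2 := cut_comp (τ := τ) hw₁ 1
      rw [cut_one σ x₁] at e2
      omega
    rw [h1, hx₁0]
    have hcut := cut_le_cut hτ w₁ (show k₁ + 1 ≤ ((σ (x ℓ)).length : ℤ) by omega)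
    have hy0len : ((τ (y 0)).length : ℤ) = cut τ w₁ (k₁ + 1) - cut τ w₁ k₁ := by
      rw [hy0]
      omega
    omega

lemma assembleB (hσ : NonErasing σ) (hτ : NonErasing τ) {X : Set (ℤ → A)}
    (hrec : RecIn (comp τ σ) X) : RecIn σ X := by
  intro y k k' x x' hx hx' h h'
  obtain ⟨hc, hxx⟩ := hrec (substPt τ hτ y) _ _ x x' hx hx' (lemB hσ hτ h) (lemB hσ hτ h')
  subst hxx
  exact ⟨cut_inj hτ (substPt σ hσ x) hc, rfl⟩

lemma assembleC (hσ : NonErasing σ) (hτ : NonErasing τ) {X : Set (ℤ → A)}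
    (hXinv : ShiftInvariant X) {z : ℤ → C} {j j' : ℤ} {y y' : ℤ → B}
    (hy : y ∈ {y : ℤ → B | ∃ (k : ℤ) (x : ℤ → A), x ∈ X ∧ IsRep σ y k x})
    (hy' : y' ∈ {y : ℤ → B | ∃ (k : ℤ) (x : ℤ → A), x ∈ X ∧ IsRep σ y k x})
    (h : IsCenteredRep τ z j y) (h' : IsCenteredRep τ z j' y')
    (hrec : ∀ (c c' : ℤ) (x x' : ℤ → A), x ∈ X → x' ∈ X →
      IsCenteredRep (comp τ σ) z c x → IsCenteredRep (comp τ σ) z c' x' → c = c' ∧ x = x') :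
    j = j' ∧ y = y' := by
  obtain ⟨k, x, hx, hyrep⟩ := hy
  obtain ⟨k', x', hx', hyrep'⟩ := hy'
  obtain ⟨x₁, k₁, c, hx₁, hcomp₁, hyeq₁, hceq₁, hk₁0, hk₁1⟩ := lemC hσ hτ hXinv hx hyrep h
  obtain ⟨x₂, k₂, c₂, hx₂, hcomp₂, hyeq₂, hceq₂, hk₂0, hk₂1⟩ := lemC hσ hτ hXinv hx' hyrep' h'
  obtain ⟨hcc, hxx⟩ := hrec c c₂ x₁ x₂ hx₁ hx₂ hcomp₁ hcomp₂
  subst hxx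
  set w₁ := substPt σ hσ x₁ with hw₁def
  have hy0 : y 0 = w₁ (0 + k₁) := hyeq₁ 0
  have hy0' : y' 0 = w₁ (0 + k₂) := hyeq₂ 0
  rw [zero_add] at hy0 hy0'
  have hj1 : j < cut τ w₁ (k₁ + 1) - cut τ w₁ k₁ := by
    have := cut_succ τ w₁ k₁
    have hb := h.2.2
    rw [hy0] at hb
    omega
  have hj1' : j' < cut τ w₁ (k₂ + 1) - cut τ w₁ k₂ := by
    have := cut_succ τ w₁ k₂
    have hb := h'.2.2
    rw [hy0'] at hb
    omega
  have hj0 := h.2.1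
  have hj0' := h'.2.1
  have hkk : k₁ = k₂ := by
    rcases lt_trichotomy k₁ k₂ with hlt | heq | hgt
    · have := cut_le_cut hτ w₁ (show k₁ + 1 ≤ k₂ by omega)
      have := cut_le_cut hτ w₁ (le_of_lt hlt)
      omega
    · exact heq
    · have := cut_le_cut hτ w₁ (show k₂ + 1 ≤ k₁ by omega)
      omega
  subst hkk
  have hjj : j = j' := by omega
  refine ⟨hjj, ?_⟩
  funext m
  rw [hyeq₁ m, hyeq₂ m]

end Main

end RecogProof

open Recog in
/-- Recognizability of a composition `τ ∘ σ` in a shift `X`, in terms of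
recognizability of `σ` in `X` and of `τ` in `Y = ∪_k T^k σ(X)`. -/
theorem stmt13 {A B C : Type*} [Fintype A] [Fintype B] [Fintype C]
    [TopologicalSpace A] [DiscreteTopology A]
    (σ : A → List B) (τ : B → List C) (hσ : NonErasing σ) (hτ : NonErasing τ)
    (X : Set (ℤ → A)) (hXcl : IsClosed X) (hXinv : ShiftInvariant X) :
    (RecIn (comp τ σ) X ↔ RecIn σ X ∧
        RecIn τ {y : ℤ → B | ∃ (k : ℤ) (x : ℤ → A), x ∈ X ∧ IsRep σ y k x}) ∧
    (RecInAp σ X → RecInAp τ {y : ℤ → B | ∃ (k : ℤ) (x : ℤ → A), x ∈ X ∧ IsRep σ y k x} →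
      RecInAp (comp τ σ) X) ∧
    (RecInAp (comp τ σ) X →
      RecInAp τ {y : ℤ → B | ∃ (k : ℤ) (x : ℤ → A), x ∈ X ∧ IsRep σ y k x}) := by
  refine ⟨⟨fun hrec => ⟨RecogProof.assembleB hσ hτ hrec, ?_⟩, fun h => ?_⟩, fun hrσ hrτ => ?_, fun hrec => ?_⟩
  · -- RecIn (comp) → RecIn τ Y
    intro z j j' y y' hy hy' hcy hcy'
    exact RecogProof.assembleC hσ hτ hXinv hy hy' hcy hcy'
      (fun c c' x x' hx hx' hc hc' => hrec z c c' x x' hx hx' hc hc')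
  · -- RecIn σ X ∧ RecIn τ Y → RecIn (comp) X
    obtain ⟨hrσ, hrτ⟩ := h
    intro z k k' x x' hx hx' hck hck'
    obtain ⟨ℓ, j, hcσ, hcτ, hkeq, -⟩ := RecogProof.lemA hσ hτ hck
    obtain ⟨ℓ', j', hcσ', hcτ', hkeq', -⟩ := RecogProof.lemA hσ hτ hck'
    obtain ⟨hjj, hyy⟩ := hrτ z j j' _ _ ⟨ℓ, x, hx, hcσ.1⟩ ⟨ℓ', x', hx', hcσ'.1⟩ hcτ hcτ'
    rw [← hyy] at hcσ'
    obtain ⟨hll, hxx⟩ := hrσ _ ℓ ℓ' x x' hx hx' hcσ hcσ'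
    subst hxx
    subst hll
    exact ⟨by omega, rfl⟩
  · -- RecInAp σ X → RecInAp τ Y → RecInAp (comp) X
    intro z hza k k' x x' hx hx' hck hck'
    obtain ⟨ℓ, j, hcσ, hcτ, hkeq, hap⟩ := RecogProof.lemA hσ hτ hck
    obtain ⟨ℓ', j', hcσ', hcτ', hkeq', -⟩ := RecogProof.lemA hσ hτ hck'
    obtain ⟨hjj, hyy⟩ := hrτ z hza j j' _ _ ⟨ℓ, x, hx, hcσ.1⟩ ⟨ℓ', x', hx', hcσ'.1⟩ hcτ hcτ'
    rw [← hyy] at hcσ'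
    obtain ⟨hll, hxx⟩ := hrσ _ (hap hza) ℓ ℓ' x x' hx hx' hcσ hcσ'
    subst hxx
    subst hll
    exact ⟨by omega, rfl⟩
  · -- RecInAp (comp) → RecInAp τ Y
    intro z hza j j' y y' hy hy' hcy hcy'
    exact RecogProof.assembleC hσ hτ hXinv hy hy' hcy hcy'
      (fun c c' x x' hx hx' hc hc' => hrec z hza c c' x x' hx hx' hc hc')
end
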